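/- arXiv:2405.12160 — 9 statements merged into one kernel-verified Lean document; each statement's English description precedes it below -/
import Mathlib

section
/- If H is a subgroup of a finite group G, then the number of maximal cyclic subgroups of H is at most the number of maximal cyclic subgroups of G. -/
def IsMaximalCyclic {G : Type*} [Group G] (H : Subgroup G) : Prop :=
  IsCyclic H ∧ ∀ K : Subgroup G, IsCyclic K → H ≤ K → H = K

lemma exists_maxcyc {G : Type*} [Group G] [Finite G] (C : Subgroup G) (hC : IsCyclic C) :
    ∃ K : Subgroup G, IsMaximalCyclic K ∧ C ≤ K := by
  have hfin : ({K : Subgroup G | IsCyclic K ∧ C ≤ K}).Finite := Set.toFinite _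
  obtain ⟨K, hK, hmax⟩ := Set.Finite.exists_maximalFor id _ hfin ⟨C, hC, le_refl C⟩
  exact ⟨K, ⟨hK.1, fun K' hK' hle => le_antisymm hle (hmax ⟨hK', hK.2.trans hle⟩ hle)⟩, hK.2⟩

lemma cyclic_comap_subtype {G : Type*} [Group G] (H K : Subgroup G) (hK : IsCyclic K) :
    IsCyclic (K.comap H.subtype) := by
  have h1 : IsCyclic ((K ⊓ H).subgroupOf K) := @Subgroup.isCyclic _ _ hK _
  have h2 : IsCyclic (K ⊓ H : Subgroup G) :=
    isCyclic_of_surjective _ (Subgroup.subgroupOfEquivOfLe inf_le_left).surjective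
  have h3 : ((K.comap H.subtype).map H.subtype : Subgroup G) = K ⊓ H := by
    rw [Subgroup.comap_subtype, Subgroup.subgroupOf_map_subtype]
  have e : (K.comap H.subtype) ≃* ((K.comap H.subtype).map H.subtype : Subgroup G) :=
    Subgroup.equivMapOfInjective _ _ H.subtype_injective
  have h4 : IsCyclic ((K.comap H.subtype).map H.subtype : Subgroup G) := h3 ▸ h2
  exact isCyclic_of_surjective _ e.symm.surjective

theorem stmt2 (G : Type*) [Group G] [Finite G] (H : Subgroup G) :
    Nat.card {K : Subgroup H // IsMaximalCyclic K} ≤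
      Nat.card {K : Subgroup G // IsMaximalCyclic K} := by
  have hch : ∀ C : {K : Subgroup H // IsMaximalCyclic K},
      ∃ K : Subgroup G, IsMaximalCyclic K ∧ (C.1.map H.subtype) ≤ K := by
    intro C
    apply exists_maxcyc
    exact isCyclic_of_surjective _
      (Subgroup.equivMapOfInjective _ _ H.subtype_injective).surjective
      (hH := C.2.1)
  choose f hf1 hf2 using hch
  have hinj : Function.Injective
      (fun C : {K : Subgroup H // IsMaximalCyclic K} => (⟨f C, hf1 C⟩ :
        {K : Subgroup G // IsMaximalCyclic K})) := by
    intro C₁ C₂ h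
    have h' : f C₁ = f C₂ := congrArg Subtype.val h
    have key : ∀ C : {K : Subgroup H // IsMaximalCyclic K},
        C.1 = (f C).comap H.subtype := by
      intro C
      refine C.2.2 _ (cyclic_comap_subtype H (f C) (hf1 C).1) ?_
      rw [← Subgroup.map_le_iff_le_comap]
      exact hf2 C
    apply Subtype.ext
    rw [key C₁, key C₂, h']
  exact Nat.card_le_card_of_injective _ hinj
end

section
/- If N is a normal subgroup of a finite noncyclic group G with G/N noncyclic, then the number of maximal cyclic subgroups of G/N is at most the number of maximal cyclic subgroups of G. -/
lemma isCyclic_iff_zpowers {G : Type*} [Group G] (H : Subgroup G) :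
    IsCyclic H ↔ ∃ g : G, H = Subgroup.zpowers g := by
  constructor
  · intro h
    obtain ⟨⟨x, hx⟩, hgen⟩ := h.exists_generator
    refine ⟨x, ?_⟩
    ext y
    constructor
    · intro hy
      obtain ⟨n, hn⟩ := hgen ⟨y, hy⟩
      exact ⟨n, congrArg Subtype.val hn⟩
    · rintro ⟨n, rfl⟩
      exact H.zpow_mem hx n
  · rintro ⟨g, rfl⟩
    refine ⟨⟨⟨g, Subgroup.mem_zpowers g⟩, ?_⟩⟩
    rintro ⟨y, n, rfl⟩
    exact ⟨n, Subtype.ext (by simp)⟩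

lemma exists_maximalCyclic {G : Type*} [Group G] [Finite G] (H : Subgroup G)
    (hH : IsCyclic H) : ∃ M : Subgroup G, IsMaximalCyclic M ∧ H ≤ M := by
  have : Finite (Subgroup G) := inferInstance
  have hs : {K : Subgroup G | IsCyclic K ∧ H ≤ K}.Finite := Set.toFinite _
  obtain ⟨M, hM, hmax'⟩ := hs.exists_maximalFor id _ ⟨H, hH, le_rfl⟩
  have hmax : ∀ K ∈ {K : Subgroup G | IsCyclic K ∧ H ≤ K}, M ≤ K → M = K :=
    fun K hK hle => le_antisymm hle (hmax' hK hle)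
  exact ⟨M, ⟨hM.1, fun K hK hle => hmax K ⟨hK, hM.2.trans hle⟩ hle⟩, hM.2⟩

theorem stmt3 (G : Type*) [Group G] [Finite G] (N : Subgroup G) [N.Normal]
    (hG : ¬ IsCyclic G) (hQ : ¬ IsCyclic (G ⧸ N)) :
    Nat.card {K : Subgroup (G ⧸ N) // IsMaximalCyclic K} ≤
      Nat.card {K : Subgroup G // IsMaximalCyclic K} := by
  classical
  -- For each maximal cyclic K of G/N, choose a maximal cyclic of G mapping onto ≥ K
  have key : ∀ K : {K : Subgroup (G ⧸ N) // IsMaximalCyclic K},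
      ∃ M : {M : Subgroup G // IsMaximalCyclic M},
        K.1 ≤ (M.1).map (QuotientGroup.mk' N) := by
    rintro ⟨K, hKc, hKmax⟩
    obtain ⟨x, rfl⟩ := (isCyclic_iff_zpowers K).mp hKc
    obtain ⟨g, rfl⟩ := QuotientGroup.mk'_surjective N x
    have hcyc : IsCyclic (Subgroup.zpowers g) :=
      (isCyclic_iff_zpowers _).mpr ⟨g, rfl⟩
    obtain ⟨M, hM, hle⟩ := exists_maximalCyclic (Subgroup.zpowers g) hcyc
    refine ⟨⟨M, hM⟩, ?_⟩
    calc Subgroup.zpowers (QuotientGroup.mk' N g)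
        = (Subgroup.zpowers g).map (QuotientGroup.mk' N) :=
          (MonoidHom.map_zpowers _ _).symm
      _ ≤ M.map (QuotientGroup.mk' N) := Subgroup.map_mono hle
  choose f hf using key
  have hinj : Function.Injective f := by
    rintro ⟨K₁, hK₁⟩ ⟨K₂, hK₂⟩ h
    have hM : IsMaximalCyclic (f ⟨K₁, hK₁⟩).1 := (f ⟨K₁, hK₁⟩).2
    obtain ⟨m, hm⟩ := (isCyclic_iff_zpowers _).mp hM.1
    have hmapcyc : IsCyclic ((f ⟨K₁, hK₁⟩).1.map (QuotientGroup.mk' N)) := by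
      rw [hm, MonoidHom.map_zpowers]
      exact (isCyclic_iff_zpowers _).mpr ⟨_, rfl⟩
    have e1 : K₁ = (f ⟨K₁, hK₁⟩).1.map (QuotientGroup.mk' N) :=
      hK₁.2 _ hmapcyc (hf ⟨K₁, hK₁⟩)
    have e2 : K₂ = (f ⟨K₁, hK₁⟩).1.map (QuotientGroup.mk' N) := by
      have := hf ⟨K₂, hK₂⟩
      rw [← h] at this
      exact hK₂.2 _ hmapcyc this
    exact Subtype.ext (e1.trans e2.symm)
  exact Nat.card_le_card_of_injective f hinj
end

section
/- Let p be a prime, P a nontrivial finite p-group with c cyclic subgroups, and G = P × C_p. Then the number of cyclic subgroups of G equals p(c−1)+2. -/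
private lemma mulpow_p (p : ℕ) (a : Multiplicative (ZMod p)) : a ^ p = 1 := by
  have h : p • a.toAdd = 0 := by rw [nsmul_eq_mul, ZMod.natCast_self, zero_mul]
  have h2 := congrArg Multiplicative.ofAdd h
  rwa [ofAdd_nsmul, ofAdd_toAdd, ofAdd_zero] at h2

private lemma mulzpow_p (p : ℕ) (a : Multiplicative (ZMod p)) {n : ℤ}
    (h : (p : ℤ) ∣ n) : a ^ n = 1 := by
  obtain ⟨m, rfl⟩ := h
  rw [zpow_mul, zpow_natCast, mulpow_p, one_zpow]

private lemma card_hom_eq {p : ℕ} (hp : p.Prime) (K : Type*) [Group K] [Finite K]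
    [hK : IsCyclic K] (hdvd : p ∣ Nat.card K) :
    Nat.card (K →* Multiplicative (ZMod p)) = p := by
  haveI : Fact p.Prime := ⟨hp⟩
  haveI : NeZero p := ⟨hp.ne_zero⟩
  set n := Nat.card K with hn
  have e1 : (Multiplicative (ZMod n) →* Multiplicative (ZMod p)) ≃
      (K →* Multiplicative (ZMod p)) :=
    MulEquiv.monoidHomCongrLeftEquiv (zmodCyclicMulEquiv hK)
  have e2 : (ZMod n →+ ZMod p) ≃ (Multiplicative (ZMod n) →* Multiplicative (ZMod p)) :=
    AddMonoidHom.toMultiplicative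
  have e3 : { f : ℤ →+ ZMod p // f n = 0 } ≃ (ZMod n →+ ZMod p) := ZMod.lift n
  have hall : ∀ a : ZMod p, (n : ℤ) • a = 0 := by
    intro a
    obtain ⟨m, hm⟩ := hdvd
    have h0 : ((n : ℤ) : ZMod p) = 0 := by
      rw [Int.cast_natCast, hm, Nat.cast_mul, ZMod.natCast_self, zero_mul]
    rw [zsmul_eq_mul, h0, zero_mul]
  have e4 : (ZMod p) ≃ { f : ℤ →+ ZMod p // f n = 0 } :=
    (Equiv.subtypeUnivEquiv (p := fun a : ZMod p => (n : ℤ) • a = 0) hall).symm.trans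
      (Equiv.subtypeEquiv (zmultiplesHom (ZMod p)) (fun a => by simp [zmultiplesHom_apply]))
  calc Nat.card (K →* Multiplicative (ZMod p))
      = Nat.card (ZMod p) := Nat.card_congr (e1.symm.trans (e2.symm.trans (e3.symm.trans e4.symm)))
    _ = p := Nat.card_zmod p


section graph

variable {P : Type*} [Group P] {p : ℕ}

private def graphS (K : Subgroup P) (χ : K →* Multiplicative (ZMod p)) :
    Subgroup (P × Multiplicative (ZMod p)) := (K.subtype.prod χ).range

private lemma mem_graphS {K : Subgroup P} {χ : K →* Multiplicative (ZMod p)}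
    {g : P × Multiplicative (ZMod p)} :
    g ∈ graphS K χ ↔ ∃ k : K, ((k : P), χ k) = g := Iff.rfl

private lemma graphS_cyclic {K : Subgroup P} (hK : IsCyclic K)
    (χ : K →* Multiplicative (ZMod p)) : IsCyclic (graphS K χ) :=
  isCyclic_of_surjective _ (K.subtype.prod χ).rangeRestrict_surjective

private lemma map_fst_graphS (K : Subgroup P) (χ : K →* Multiplicative (ZMod p)) :
    (graphS K χ).map (MonoidHom.fst P (Multiplicative (ZMod p))) = K := by
  ext x
  constructor
  · rintro ⟨g, hg, rfl⟩
    obtain ⟨k, rfl⟩ := mem_graphS.mp hg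
    exact k.2
  · intro hx
    exact ⟨(x, χ ⟨x, hx⟩), ⟨⟨x, hx⟩, rfl⟩, rfl⟩

private lemma graphS_inj {K : Subgroup P} {χ χ' : K →* Multiplicative (ZMod p)}
    (h : graphS K χ = graphS K χ') : χ = χ' := by
  ext k
  have hm : ((k : P), χ k) ∈ graphS K χ' := h ▸ mem_graphS.mpr ⟨k, rfl⟩
  obtain ⟨k', hk'⟩ := mem_graphS.mp hm
  have hkk : k' = k := Subtype.ext (congrArg Prod.fst hk')
  have h2 := congrArg Prod.snd hk'
  rw [hkk] at h2
  exact h2.symm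


private lemma classify (hp : p.Prime) (hP : IsPGroup p P) [Finite P]
    (H : Subgroup (P × Multiplicative (ZMod p))) (hH : IsCyclic H)
    (h1 : H ≠ ⊥) (h2 : H ≠ (⊥ : Subgroup P).prod ⊤) :
    ∃ (K : Subgroup P) (χ : K →* Multiplicative (ZMod p)),
      IsCyclic K ∧ K ≠ ⊥ ∧ graphS K χ = H := by
  haveI : Fact p.Prime := ⟨hp⟩
  haveI : NeZero p := ⟨hp.ne_zero⟩
  obtain ⟨⟨g, hgH⟩, hgen⟩ := hH.exists_generator
  have hzp : Subgroup.zpowers g = H := by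
    apply le_antisymm (Subgroup.zpowers_le.2 hgH)
    intro h hh
    obtain ⟨n, hn⟩ := Subgroup.mem_zpowers_iff.mp (hgen ⟨h, hh⟩)
    exact Subgroup.mem_zpowers_iff.mpr ⟨n, by simpa using congrArg Subtype.val hn⟩
  obtain ⟨x, a⟩ := g
  by_cases hx : x = 1
  · subst hx
    exfalso
    set B := (⊥ : Subgroup P).prod (⊤ : Subgroup (Multiplicative (ZMod p))) with hB
    have hle : H ≤ B := by
      rw [← hzp]
      exact Subgroup.zpowers_le.2 (Subgroup.mem_prod.mpr ⟨Subgroup.mem_bot.mpr rfl, trivial⟩)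
    have hcardB : Nat.card B = p := by
      rw [Nat.card_congr (Subgroup.prodEquiv _ _).toEquiv, Nat.card_prod,
        Subgroup.card_bot, one_mul, Subgroup.card_top]
      exact (Nat.card_congr Multiplicative.toAdd).trans (Nat.card_zmod p)
    obtain ⟨⟨h, hhH⟩, hne⟩ := Subgroup.ne_bot_iff_exists_ne_one.mp h1
    set b : B := ⟨h, hle hhH⟩ with hb
    have hbne : b ≠ 1 := by
      intro hb1
      have hh1 : h = 1 := congrArg Subtype.val hb1
      exact hne (Subtype.ext hh1)
    have hob : orderOf b = p := by
      have hdvd := orderOf_dvd_natCard b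
      rw [hcardB] at hdvd
      rcases (Nat.Prime.eq_one_or_self_of_dvd hp _ hdvd) with h' | h'
      · exact absurd (orderOf_eq_one_iff.mp h') hbne
      · exact h'
    have hZB : Subgroup.zpowers b = ⊤ := by
      apply Subgroup.eq_of_le_of_card_ge le_top
      rw [Subgroup.card_top, Nat.card_zpowers, hob, hcardB]
    have hBH : B ≤ H := by
      intro y hy
      have : (⟨y, hy⟩ : B) ∈ Subgroup.zpowers b := by rw [hZB]; trivial
      obtain ⟨n, hn⟩ := Subgroup.mem_zpowers_iff.mp this
      have hyh : h ^ n = y := by simpa using congrArg Subtype.val hn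
      exact hyh ▸ H.zpow_mem hhH n
    exact h2 (le_antisymm hle hBH)
  · have hpx : (p : ℤ) ∣ (orderOf x : ℤ) := by
      obtain ⟨k, hxk⟩ := hP x
      obtain ⟨j, hj, hoj⟩ := (Nat.dvd_prime_pow hp).mp (orderOf_dvd_of_pow_eq_one hxk)
      have hj0 : j ≠ 0 := by
        rintro rfl
        rw [pow_zero] at hoj
        exact hx (orderOf_eq_one_iff.mp hoj)
      exact_mod_cast hoj ▸ dvd_pow_self p hj0
    have key : ∀ b : Multiplicative (ZMod p), ((1 : P), b) ∈ H → b = 1 := by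
      intro b hb
      rw [← hzp] at hb
      obtain ⟨n, hn⟩ := Subgroup.mem_zpowers_iff.mp hb
      have hx1 : x ^ n = 1 := congrArg Prod.fst hn
      have hdvd : (orderOf x : ℤ) ∣ n := orderOf_dvd_iff_zpow_eq_one.mpr hx1
      have ha : a ^ n = 1 := mulzpow_p p a (hpx.trans hdvd)
      have hb' : a ^ n = b := congrArg Prod.snd hn
      rw [← hb', ha]
    set f : H →* P := (MonoidHom.fst P (Multiplicative (ZMod p))).comp H.subtype with hf
    have hinj : Function.Injective f := by
      rw [injective_iff_map_eq_one]
      intro h hh1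
      have hmem : ((1 : P), (h : P × Multiplicative (ZMod p)).2) ∈ H := by
        have := h.2
        rw [show ((h : P × Multiplicative (ZMod p))) =
          ((h : P × Multiplicative (ZMod p)).1, (h : P × Multiplicative (ZMod p)).2) from rfl,
          show (h : P × Multiplicative (ZMod p)).1 = 1 from hh1] at this
        exact this
      have hb := key _ hmem
      apply Subtype.ext
      exact Prod.ext hh1 hb
    set K := f.range with hK
    haveI := hH
    have hcyc : IsCyclic K := isCyclic_of_surjective _ f.rangeRestrict_surjective
    have hKne : K ≠ ⊥ := by
      intro hbot
      have hxK : x ∈ K := ⟨⟨(x, a), by rw [← hzp]; exact Subgroup.mem_zpowers _⟩, rfl⟩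
      rw [hbot] at hxK
      exact hx (Subgroup.mem_bot.mp hxK)
    have hbij : Function.Bijective f.rangeRestrict :=
      ⟨fun u v huv => hinj (congrArg Subtype.val huv), f.rangeRestrict_surjective⟩
    set e : H ≃* K := MulEquiv.ofBijective f.rangeRestrict hbij with he
    set χ : K →* Multiplicative (ZMod p) :=
      (MonoidHom.snd P (Multiplicative (ZMod p))).comp
        (H.subtype.comp e.symm.toMonoidHom) with hχ
    refine ⟨K, χ, hcyc, hKne, ?_⟩
    have hid : ∀ h : H, (((e h : K) : P), χ (e h)) = (h : P × Multiplicative (ZMod p)) := by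
      intro h
      have hfst : ((e h : K) : P) = (h : P × Multiplicative (ZMod p)).1 := rfl
      have hsnd : χ (e h) = (h : P × Multiplicative (ZMod p)).2 := by
        show ((H.subtype (e.symm (e h)) : P × Multiplicative (ZMod p))).2 = _
        rw [e.symm_apply_apply]
        rfl
      rw [hfst, hsnd]
    apply le_antisymm
    · intro g hg
      obtain ⟨k, rfl⟩ := mem_graphS.mp hg
      have h3 := hid (e.symm k)
      rw [e.apply_symm_apply] at h3
      rw [h3]
      exact (e.symm k).2
    · intro g hg
      exact mem_graphS.mpr ⟨e ⟨g, hg⟩, hid ⟨g, hg⟩⟩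


end graph


section main

variable {P : Type*} [Group P] {p : ℕ}

private lemma B_cyclic (p : ℕ) (P : Type*) [Group P] :
    IsCyclic ((⊥ : Subgroup P).prod (⊤ : Subgroup (Multiplicative (ZMod p)))) := by
  have hrange : ((1 : Multiplicative (ZMod p) →* P).prod (MonoidHom.id _)).range
      = (⊥ : Subgroup P).prod ⊤ := by
    ext g
    constructor
    · rintro ⟨b, rfl⟩
      exact Subgroup.mem_prod.mpr ⟨Subgroup.mem_bot.mpr rfl, trivial⟩
    · intro hg
      obtain ⟨hg1, -⟩ := Subgroup.mem_prod.mp hg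
      refine ⟨g.2, ?_⟩
      have : g.1 = 1 := Subgroup.mem_bot.mp hg1
      exact Prod.ext this.symm rfl
  rw [← hrange]
  exact isCyclic_of_surjective _
    ((1 : Multiplicative (ZMod p) →* P).prod (MonoidHom.id _)).rangeRestrict_surjective

private lemma map_fst_B (p : ℕ) (P : Type*) [Group P] :
    ((⊥ : Subgroup P).prod (⊤ : Subgroup (Multiplicative (ZMod p)))).map
      (MonoidHom.fst P (Multiplicative (ZMod p))) = ⊥ := by
  ext x
  simp only [Subgroup.mem_map, Subgroup.mem_prod, Subgroup.mem_bot, Subgroup.mem_top]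
  constructor
  · rintro ⟨g, ⟨hg1, -⟩, rfl⟩
    exact hg1
  · rintro rfl
    exact ⟨1, ⟨rfl, trivial⟩, rfl⟩

end main

theorem stmt5 (p : ℕ) (hp : p.Prime) (P : Type*) [Group P] [Finite P] [Nontrivial P]
    (hP : IsPGroup p P) (c : ℕ) (hc : c = Nat.card {H : Subgroup P // IsCyclic H}) :
    Nat.card {H : Subgroup (P × Multiplicative (ZMod p)) // IsCyclic H}
      = p * (c - 1) + 2 := by
  classical
  haveI : Fact p.Prime := ⟨hp⟩
  haveI : NeZero p := ⟨hp.ne_zero⟩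
  haveI : Finite (Subgroup (P × Multiplicative (ZMod p))) :=
    Finite.of_injective (fun H => (H : Set (P × Multiplicative (ZMod p)))) SetLike.coe_injective
  haveI : Finite (Subgroup P) :=
    Finite.of_injective (fun H => (H : Set P)) SetLike.coe_injective
  set S := {H : Subgroup (P × Multiplicative (ZMod p)) // IsCyclic H} with hS
  set pr : S → Prop := fun H => H.1 = ⊥ ∨ H.1 = (⊥ : Subgroup P).prod ⊤ with hprdef
  have hsplit : Nat.card S = Nat.card {H : S // pr H} + Nat.card {H : S // ¬ pr H} := by
    rw [← Nat.card_sum]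
    exact Nat.card_congr (Equiv.sumCompl pr).symm
  set b1 : S := ⟨⊥, inferInstance⟩ with hb1
  set b2 : S := ⟨(⊥ : Subgroup P).prod ⊤, B_cyclic p P⟩ with hb2
  have hb12 : b1 ≠ b2 := by
    intro hh
    have h12 : (⊥ : Subgroup (P × Multiplicative (ZMod p))) = (⊥ : Subgroup P).prod ⊤ :=
      congrArg Subtype.val hh
    have hmem : ((1 : P), Multiplicative.ofAdd (1 : ZMod p)) ∈ (⊥ : Subgroup P).prod ⊤ :=
      Subgroup.mem_prod.mpr ⟨Subgroup.mem_bot.mpr rfl, trivial⟩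
    rw [← h12] at hmem
    have h0 := Subgroup.mem_bot.mp hmem
    have h1 : Multiplicative.ofAdd (1 : ZMod p) = 1 := congrArg Prod.snd h0
    have h2 := congrArg Multiplicative.toAdd h1
    simp only [toAdd_ofAdd, toAdd_one] at h2
    exact one_ne_zero h2
  have hpriff : ∀ H : S, pr H ↔ H ∈ ({b1, b2} : Set S) := by
    intro H
    simp only [hprdef, hb1, hb2, Set.mem_insert_iff, Set.mem_singleton_iff]
    constructor
    · rintro (h | h)
      · exact Or.inl (Subtype.ext h)
      · exact Or.inr (Subtype.ext h)
    · rintro (rfl | rfl)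
      · exact Or.inl rfl
      · exact Or.inr rfl
  have hcard1 : Nat.card {H : S // pr H} = 2 := by
    rw [Nat.card_congr (Equiv.subtypeEquivRight hpriff)]
    rw [Nat.card_coe_set_eq, Set.ncard_pair hb12]
  set I := {K : Subgroup P // IsCyclic K ∧ K ≠ ⊥} with hI
  have hnotpr : ∀ x : (Σ K : I, (K.1 →* Multiplicative (ZMod p))),
      ¬ (graphS x.1.1 x.2 = ⊥ ∨ graphS x.1.1 x.2 = (⊥ : Subgroup P).prod ⊤) := by
    rintro ⟨⟨K, hKc, hKb⟩, χ⟩ (h | h)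
    · exact hKb (by rw [← map_fst_graphS K χ, h, Subgroup.map_bot])
    · exact hKb (by rw [← map_fst_graphS K χ, h, map_fst_B])
  have hcard2 : Nat.card {H : S // ¬ pr H} =
      Nat.card (Σ K : I, (K.1 →* Multiplicative (ZMod p))) := by
    let F : (Σ K : I, (K.1 →* Multiplicative (ZMod p))) → {H : S // ¬ pr H} := fun x =>
      ⟨⟨graphS x.1.1 x.2, graphS_cyclic x.1.2.1 x.2⟩, hnotpr x⟩
    have hbij : Function.Bijective F := by
      constructor
      · rintro ⟨⟨K, hK⟩, χ⟩ ⟨⟨K', hK'⟩, χ'⟩ hFeq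
        have hgr : graphS K χ = graphS K' χ' := congrArg (fun z => z.1.1) hFeq
        have hKK : K = K' := by rw [← map_fst_graphS K χ, ← map_fst_graphS K' χ', hgr]
        subst hKK
        have hχ : χ = χ' := graphS_inj hgr
        subst hχ
        rfl
      · rintro ⟨⟨H, hcyc⟩, hnp⟩
        have hnp' : ¬ (H = ⊥ ∨ H = (⊥ : Subgroup P).prod ⊤) := hnp
        rw [not_or] at hnp'
        obtain ⟨K, χ, hKc, hKb, hgr⟩ := classify hp hP H hcyc hnp'.1 hnp'.2
        exact ⟨⟨⟨K, hKc, hKb⟩, χ⟩, Subtype.ext (Subtype.ext hgr)⟩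
    exact (Nat.card_congr (Equiv.ofBijective F hbij)).symm
  have hcard3 : Nat.card (Σ K : I, (K.1 →* Multiplicative (ZMod p))) = (c - 1) * p := by
    haveI hfin : ∀ K : I, Finite (K.1 →* Multiplicative (ZMod p)) := fun K =>
      Finite.of_injective _ DFunLike.coe_injective
    haveI : Fintype I := Fintype.ofFinite I
    haveI : ∀ K : I, Fintype (K.1 →* Multiplicative (ZMod p)) := fun K => Fintype.ofFinite _
    rw [Nat.card_eq_fintype_card, Fintype.card_sigma]
    have hterm : ∀ K : I, Fintype.card (K.1 →* Multiplicative (ZMod p)) = p := by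
      intro K
      rw [← Nat.card_eq_fintype_card]
      haveI := K.2.1
      apply card_hom_eq hp
      obtain ⟨n, hn⟩ := IsPGroup.iff_card.mp (hP.to_subgroup K.1)
      rcases n with _ | m
      · rw [pow_zero] at hn
        exact absurd (Subgroup.card_eq_one.mp hn) K.2.2
      · exact hn ▸ dvd_pow_self p (Nat.succ_ne_zero m)
    rw [Finset.sum_congr rfl (fun K _ => hterm K), Finset.sum_const, smul_eq_mul,
      Finset.card_univ]
    congr 1
    -- Fintype.card I = c - 1
    haveI : Fintype {K : Subgroup P // IsCyclic K} := Fintype.ofFinite _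
    let a0 : {K : Subgroup P // IsCyclic K} := ⟨⊥, inferInstance⟩
    have e : I ≃ {x : {K : Subgroup P // IsCyclic K} // ¬ (x = a0)} :=
      { toFun := fun K => ⟨⟨K.1, K.2.1⟩, fun h => K.2.2 (congrArg Subtype.val h)⟩
        invFun := fun x => ⟨x.1.1, x.1.2, fun h => x.2 (Subtype.ext h)⟩
        left_inv := fun _ => rfl
        right_inv := fun _ => rfl }
    rw [Fintype.card_congr e, Fintype.card_subtype_compl, Fintype.card_subtype_eq,
      hc, Nat.card_eq_fintype_card]
  rw [hsplit, hcard1, hcard2, hcard3, Nat.mul_comm]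
  exact Nat.add_comm 2 _
end

section
/- Let p be a prime, P a nontrivial finite p-group with c cyclic subgroups and λ maximal cyclic subgroups, and G = P × C_p. Then the number of maximal cyclic subgroups of G equals (p−1)(c−1)+λ+1. -/
open Subgroup

namespace Stmt6Aux

section General
variable {G : Type*} [Group G]

lemma isCyclic_zpowers' (g : G) : IsCyclic (zpowers g) := by
  constructor
  refine ⟨⟨g, mem_zpowers g⟩, ?_⟩
  rintro ⟨x, hx⟩
  obtain ⟨k, hk⟩ := mem_zpowers_iff.mp hx
  exact mem_zpowers_iff.mpr ⟨k, Subtype.ext (by simpa using hk)⟩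

lemma exists_zpowers_eq (H : Subgroup G) (h : IsCyclic H) : ∃ g, g ∈ H ∧ zpowers g = H := by
  obtain ⟨⟨g, hg⟩, hgen⟩ := h.exists_generator
  refine ⟨g, hg, le_antisymm (zpowers_le.mpr hg) fun x hx => ?_⟩
  obtain ⟨k, hk⟩ := mem_zpowers_iff.mp (hgen ⟨x, hx⟩)
  refine mem_zpowers_iff.mpr ⟨k, ?_⟩
  have := congrArg (Subtype.val) hk
  simpa using this

lemma isCyclic_map {N : Type*} [Group N] (f : G →* N) (H : Subgroup G) (h : IsCyclic H) :
    IsCyclic (H.map f) :=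
  isCyclic_of_surjective (hH := h) (f.subgroupMap H) (f.subgroupMap_surjective H)

lemma card_split {α : Type*} [Finite α] (Pr Q : α → Prop) :
    Nat.card {x // Pr x} = Nat.card {x // Pr x ∧ Q x} + Nat.card {x // Pr x ∧ ¬ Q x} := by
  classical
  rw [← Nat.card_sum]
  refine Nat.card_congr ((Equiv.sumCompl fun y : {x // Pr x} => Q y.1).symm.trans
    (Equiv.sumCongr ?_ ?_))
  · exact Equiv.subtypeSubtypeEquivSubtypeInter Pr Q
  · exact Equiv.subtypeSubtypeEquivSubtypeInter Pr fun x => ¬ Q x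

lemma card_split' {α : Type*} [Finite α] (Q : α → Prop) :
    Nat.card α = Nat.card {x // Q x} + Nat.card {x // ¬ Q x} := by
  classical
  rw [← Nat.card_sum]
  exact Nat.card_congr (Equiv.sumCompl Q).symm

lemma maxcyc_ne_bot [Nontrivial G] {H : Subgroup G} (h : IsMaximalCyclic H) :
    H ≠ ⊥ := by
  obtain ⟨g, hg⟩ := exists_ne (1 : G)
  intro hbot
  have h2 := h.2 (zpowers g) (isCyclic_zpowers' g) (hbot ▸ bot_le)
  rw [hbot] at h2
  exact hg (zpowers_eq_bot.mp h2.symm)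

end General

abbrev GG (p : ℕ) (P : Type*) [Group P] := P × Multiplicative (ZMod p)
abbrev TT (p : ℕ) (P : Type*) [Group P] : Subgroup (GG p P) := (⊤ : Subgroup P).prod ⊥

variable {p : ℕ} {P : Type*} [Group P]

lemma cardQ (hp : p.Prime) : Nat.card (Multiplicative (ZMod p)) = p := by
  haveI : NeZero p := ⟨hp.ne_zero⟩
  rw [Nat.card_congr Multiplicative.toAdd, Nat.card_zmod]

lemma ordQ_dvd (hp : p.Prime) (a : Multiplicative (ZMod p)) : orderOf a ∣ p := by
  have := _root_.orderOf_dvd_natCard a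
  rwa [cardQ hp] at this

lemma ordQ_eq (hp : p.Prime) {a : Multiplicative (ZMod p)} (ha : a ≠ 1) : orderOf a = p := by
  rcases (Nat.dvd_prime hp).mp (ordQ_dvd hp a) with h | h
  · exact absurd (orderOf_eq_one_iff.mp h) ha
  · exact h

lemma p_dvd_orderOf (hp : p.Prime) (hP : IsPGroup p P) {x : P} (hx : x ≠ 1) :
    p ∣ orderOf x := by
  haveI := Fact.mk hp
  obtain ⟨k, hk⟩ := IsPGroup.iff_orderOf.mp hP x
  rcases Nat.eq_zero_or_pos k with rfl | hkpos
  · rw [pow_zero] at hk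
    exact absurd (orderOf_eq_one_iff.mp hk) hx
  · rw [hk]
    exact dvd_pow_self p hkpos.ne'

lemma modeq_contra (hp : p.Prime) (hP : IsPGroup p P) {x : P} (hx : x ≠ 1) {j i : ℕ}
    (hj : p ∣ j) (h : j * i ≡ 1 [MOD orderOf x]) : False := by
  have h1 : j * i ≡ 1 [MOD p] := h.of_dvd (p_dvd_orderOf hp hP hx)
  have h0 : j * i ≡ 0 [MOD p] := Nat.modEq_zero_iff_dvd.mpr (hj.mul_right i)
  have h2 : (0 : ℕ) ≡ 1 [MOD p] := h0.symm.trans h1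
  have h3 : p ∣ 1 := (Nat.modEq_iff_dvd' (Nat.zero_le 1)).mp h2
  exact hp.one_lt.ne' (Nat.dvd_one.mp h3)

lemma ofAdd_one_ne (hp : p.Prime) : (Multiplicative.ofAdd (1 : ZMod p)) ≠ 1 := by
  haveI := Fact.mk hp
  intro h
  have h2 : (1 : ZMod p) = 0 := by simpa using congrArg Multiplicative.toAdd h
  exact one_ne_zero h2

section F
variable [Finite P]

lemma snd_eq (hp : p.Prime) (hP : IsPGroup p P) {x : P} (hx : x ≠ 1)
    {a a' : Multiplicative (ZMod p)}
    (h : ((x, a') : GG p P) ∈ zpowers ((x, a) : GG p P)) : a' = a := by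
  haveI := Fact.mk hp
  haveI : NeZero p := ⟨hp.ne_zero⟩
  obtain ⟨k, hk⟩ := (Submonoid.mem_powers_iff _ _).mp (mem_powers_iff_mem_zpowers.mpr h)
  rw [Prod.pow_mk, Prod.mk.injEq] at hk
  have h1 : x ^ k = x ^ 1 := by rw [pow_one]; exact hk.1
  have hmod : k ≡ 1 [MOD orderOf x] := pow_eq_pow_iff_modEq.mp h1
  have hdvd : orderOf a ∣ orderOf x := (ordQ_dvd hp a).trans (p_dvd_orderOf hp hP hx)
  have h2 : a ^ k = a ^ 1 := pow_eq_pow_iff_modEq.mpr (hmod.of_dvd hdvd)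
  rw [pow_one] at h2
  rw [← hk.2, h2]

lemma zpowers_one_a (hp : p.Prime) {a : Multiplicative (ZMod p)} (ha : a ≠ 1) :
    zpowers ((1, a) : GG p P) = (⊥ : Subgroup P).prod ⊤ := by
  haveI := Fact.mk hp
  haveI : NeZero p := ⟨hp.ne_zero⟩
  have htop : zpowers a = ⊤ := zpowers_eq_top_of_prime_card (cardQ hp) ha
  ext ⟨y, b⟩
  simp only [mem_prod, mem_bot, mem_top, and_true]
  constructor
  · intro hm
    obtain ⟨k, hk⟩ := (Submonoid.mem_powers_iff _ _).mp (mem_powers_iff_mem_zpowers.mpr hm)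
    have := congrArg Prod.fst hk
    simpa using this.symm
  · rintro rfl
    have hb : b ∈ zpowers a := htop.symm ▸ mem_top b
    obtain ⟨k, hk⟩ := (Submonoid.mem_powers_iff _ _).mp (mem_powers_iff_mem_zpowers.mpr hb)
    refine mem_powers_iff_mem_zpowers.mp ((Submonoid.mem_powers_iff _ _).mpr ⟨k, ?_⟩)
    rw [Prod.pow_mk, one_pow, hk]

lemma hGpgroup (hp : p.Prime) (hP : IsPGroup p P) : IsPGroup p (GG p P) := by
  intro g
  obtain ⟨k, hk⟩ := hP g.1
  have ha : g.2 ^ p = 1 := orderOf_dvd_iff_pow_eq_one.mp (ordQ_dvd hp g.2)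
  refine ⟨k + 1, ?_⟩
  have hg : g = (g.1, g.2) := rfl
  rw [hg, Prod.pow_mk, Prod.mk_eq_one]
  constructor
  · rw [pow_add, pow_one, pow_mul, hk, one_pow]
  · rw [pow_add, pow_one, mul_comm (p ^ k) p, pow_mul, ha, one_pow]

lemma map_inl_fst (K : Subgroup P) :
    ((K.map (MonoidHom.inl P (Multiplicative (ZMod p)))).map
      (MonoidHom.fst P (Multiplicative (ZMod p)))) = K := by
  rw [Subgroup.map_map, MonoidHom.fst_comp_inl, Subgroup.map_id]

lemma mem_TT {z : GG p P} : z ∈ TT p P ↔ z.2 = 1 := by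
  rw [mem_prod, mem_bot]
  simp

lemma map_fst_inl {H : Subgroup (GG p P)} (hT : H ≤ TT p P) :
    ((H.map (MonoidHom.fst P (Multiplicative (ZMod p)))).map
      (MonoidHom.inl P (Multiplicative (ZMod p)))) = H := by
  ext z
  constructor
  · rintro ⟨y', hy', rfl⟩
    obtain ⟨w, hw, rfl⟩ := hy'
    have hw2 : w.2 = 1 := mem_TT.mp (hT hw)
    have heq : (MonoidHom.inl P (Multiplicative (ZMod p)))
        ((MonoidHom.fst P (Multiplicative (ZMod p))) w) = w := by
      ext
      · rfl
      · exact hw2.symm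
    rwa [heq]
  · intro hz
    have hz2 : z.2 = 1 := mem_TT.mp (hT hz)
    refine ⟨z.1, ⟨z, hz, rfl⟩, ?_⟩
    ext
    · rfl
    · exact hz2.symm

lemma map_inl_le_TT (K : Subgroup P) :
    K.map (MonoidHom.inl P (Multiplicative (ZMod p))) ≤ TT p P := by
  rintro z ⟨x, hx, rfl⟩
  exact mem_TT.mpr rfl

lemma max_inl (hp : p.Prime) (hP : IsPGroup p P) [Nontrivial P] (K : Subgroup P)
    (hK : IsMaximalCyclic K) :
    IsMaximalCyclic (K.map (MonoidHom.inl P (Multiplicative (ZMod p)))) := by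
  haveI := Fact.mk hp
  haveI : NeZero p := ⟨hp.ne_zero⟩
  refine ⟨isCyclic_map _ _ hK.1, fun L hL hle => ?_⟩
  obtain ⟨⟨z, d⟩, hzd, hgen⟩ := exists_zpowers_eq L hL
  have hfst : L.map (MonoidHom.fst P (Multiplicative (ZMod p))) = K := by
    refine (hK.2 _ (isCyclic_map _ _ hL) ?_).symm
    have := Subgroup.map_mono (f := MonoidHom.fst P (Multiplicative (ZMod p))) hle
    rwa [map_inl_fst K] at this
  have hz : z ∈ K := by
    rw [← hfst]
    exact ⟨(z, d), hzd, rfl⟩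
  have hzne : z ≠ 1 := by
    intro h1
    refine maxcyc_ne_bot hK ?_
    rw [← hfst, ← hgen, MonoidHom.map_zpowers]
    simp [h1, zpowers_eq_bot]
  by_cases hd : d = 1
  · subst hd
    have hLT : L ≤ TT p P := by
      rw [← hgen]
      exact zpowers_le.mpr (mem_TT.mpr rfl)
    rw [← hfst, map_fst_inl hLT]
  · exfalso
    have hmem : ((z, 1) : GG p P) ∈ L := hle ⟨z, hz, rfl⟩
    rw [← hgen] at hmem
    obtain ⟨k, hk⟩ := (Submonoid.mem_powers_iff _ _).mp (mem_powers_iff_mem_zpowers.mpr hmem)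
    rw [Prod.pow_mk, Prod.mk.injEq] at hk
    have hpk : p ∣ k := (ordQ_eq hp hd) ▸ orderOf_dvd_of_pow_eq_one hk.2
    have hmod : k * 1 ≡ 1 [MOD orderOf z] := by
      rw [mul_one]
      refine pow_eq_pow_iff_modEq.mp ?_
      rw [pow_one]
      exact hk.1
    exact modeq_contra hp hP hzne hpk hmod

lemma max_fst {H : Subgroup (GG p P)} (hH : IsMaximalCyclic H)
    (hT : H ≤ TT p P) :
    IsMaximalCyclic (H.map (MonoidHom.fst P (Multiplicative (ZMod p)))) := by
  refine ⟨isCyclic_map _ _ hH.1, fun K' hK' hle => ?_⟩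
  have h1 : H = K'.map (MonoidHom.inl P (Multiplicative (ZMod p))) := by
    refine hH.2 _ (isCyclic_map _ _ hK') ?_
    rw [← map_fst_inl hT]
    exact Subgroup.map_mono hle
  rw [h1, map_inl_fst]

lemma max_of_not_le_TT (hp : p.Prime) (hP : IsPGroup p P) {H : Subgroup (GG p P)}
    (hc : IsCyclic H) (hn : ¬ H ≤ TT p P) : IsMaximalCyclic H := by
  haveI := Fact.mk hp
  haveI : NeZero p := ⟨hp.ne_zero⟩
  refine ⟨hc, fun L hL hle => ?_⟩
  obtain ⟨⟨x, a⟩, hxa, hgen⟩ := exists_zpowers_eq H hc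
  have ha : a ≠ 1 := by
    rintro rfl
    exact hn (by rw [← hgen]; exact zpowers_le.mpr (mem_TT.mpr rfl))
  obtain ⟨⟨y, b⟩, hyb, hgenL⟩ := exists_zpowers_eq L hL
  have hmem : ((x, a) : GG p P) ∈ zpowers ((y, b) : GG p P) := by
    rw [hgenL]; exact hle hxa
  obtain ⟨k, hk⟩ := (Submonoid.mem_powers_iff _ _).mp (mem_powers_iff_mem_zpowers.mpr hmem)
  have hbk : b ^ k = a := by
    have := congrArg Prod.snd hk
    simpa using this
  have hpk : ¬ p ∣ k := by
    intro hdvd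
    apply ha
    rw [← hbk]
    exact orderOf_dvd_iff_pow_eq_one.mp ((ordQ_dvd hp b).trans hdvd)
  obtain ⟨m, hm⟩ := IsPGroup.iff_orderOf.mp (hGpgroup hp hP) ((y, b) : GG p P)
  have hco : (orderOf ((y, b) : GG p P)).Coprime k := by
    rw [hm]
    exact Nat.Coprime.pow_left m (hp.coprime_iff_not_dvd.mpr hpk)
  have hcard : orderOf (((y, b) : GG p P) ^ k) = orderOf ((y, b) : GG p P) :=
    Nat.Coprime.orderOf_pow hco
  rw [← hgen, ← hgenL, ← hk]
  refine Subgroup.eq_of_le_of_card_ge (zpowers_le.mpr (Subgroup.pow_mem _ (mem_zpowers _) k)) ?_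
  rw [Nat.card_zpowers, Nat.card_zpowers, hcard]

lemma piece1 [Nontrivial P] (hp : p.Prime) (hP : IsPGroup p P) :
    Nat.card {H : Subgroup (GG p P) // IsMaximalCyclic H ∧ H ≤ TT p P}
      = Nat.card {K : Subgroup P // IsMaximalCyclic K} := by
  haveI : NeZero p := ⟨hp.ne_zero⟩
  exact Nat.card_congr
    { toFun := fun H => ⟨H.1.map (MonoidHom.fst P (Multiplicative (ZMod p))),
        max_fst H.2.1 H.2.2⟩
      invFun := fun K => ⟨K.1.map (MonoidHom.inl P (Multiplicative (ZMod p))),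
        max_inl hp hP K.1 K.2, map_inl_le_TT K.1⟩
      left_inv := fun H => Subtype.ext (map_fst_inl H.2.2)
      right_inv := fun K => Subtype.ext (map_inl_fst K.1) }

noncomputable def genD (D : Subgroup P) (h : IsCyclic D) : P := (exists_zpowers_eq D h).choose

lemma genD_spec (D : Subgroup P) (h : IsCyclic D) :
    genD D h ∈ D ∧ zpowers (genD D h) = D := (exists_zpowers_eq D h).choose_spec

noncomputable def Fmap (hp : p.Prime) :
    (({D : Subgroup P // IsCyclic D ∧ D ≠ ⊥} × {a : Multiplicative (ZMod p) // a ≠ 1}) ⊕ Unit) →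
      {H : Subgroup (GG p P) // IsCyclic H ∧ ¬ H ≤ TT p P} := fun z =>
  match z with
  | Sum.inl (D, a) =>
    ⟨zpowers ((genD D.1 D.2.1, a.1) : GG p P), isCyclic_zpowers' _, fun hle =>
      a.2 (mem_TT.mp (hle (mem_zpowers _)))⟩
  | Sum.inr _ =>
    ⟨(⊥ : Subgroup P).prod ⊤,
      by rw [← zpowers_one_a hp (ofAdd_one_ne hp)]; exact isCyclic_zpowers' _,
      fun hle => ofAdd_one_ne hp (mem_TT.mp (hle (by simp [mem_prod] :
        ((1, Multiplicative.ofAdd (1 : ZMod p)) : GG p P) ∈ (⊥ : Subgroup P).prod ⊤)))⟩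

lemma Fmap_bijective (hp : p.Prime) (hP : IsPGroup p P) :
    Function.Bijective (Fmap (P := P) hp) := by
  haveI := Fact.mk hp
  haveI : NeZero p := ⟨hp.ne_zero⟩
  constructor
  · rintro (⟨D, a⟩ | ⟨⟩) (⟨D', a'⟩ | ⟨⟩) h
    · have h1 : zpowers ((genD D.1 D.2.1, a.1) : GG p P)
          = zpowers ((genD D'.1 D'.2.1, a'.1) : GG p P) := Subtype.ext_iff.mp h
      have hDD : D.1 = D'.1 := by
        have h2 := congrArg (Subgroup.map (MonoidHom.fst P (Multiplicative (ZMod p)))) h1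
        rw [MonoidHom.map_zpowers, MonoidHom.map_zpowers] at h2
        simpa [(genD_spec D.1 D.2.1).2, (genD_spec D'.1 D'.2.1).2] using h2
      obtain ⟨D, hD⟩ := D
      obtain ⟨D', hD'⟩ := D'
      simp only at hDD
      subst hDD
      have hgne : genD D hD.1 ≠ 1 := by
        intro h1'
        apply hD.2
        rw [← (genD_spec D hD.1).2, h1', zpowers_eq_bot]
      have hmem : ((genD D hD.1, a'.1) : GG p P) ∈ zpowers ((genD D hD.1, a.1) : GG p P) := by
        rw [h1]
        exact mem_zpowers _
      have haa : a'.1 = a.1 := snd_eq hp hP hgne hmem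
      congr 1
      exact Prod.ext rfl (Subtype.ext haa.symm)
    · exfalso
      have h1 : zpowers ((genD D.1 D.2.1, a.1) : GG p P) = (⊥ : Subgroup P).prod ⊤ :=
        Subtype.ext_iff.mp h
      have hmem : ((genD D.1 D.2.1, a.1) : GG p P) ∈ (⊥ : Subgroup P).prod ⊤ := by
        rw [← h1]; exact mem_zpowers _
      have hg1 : genD D.1 D.2.1 = 1 := by simpa [mem_prod] using (mem_prod.mp hmem).1
      apply D.2.2
      rw [← (genD_spec D.1 D.2.1).2, hg1, zpowers_eq_bot]
    · exfalso
      have h1 : (⊥ : Subgroup P).prod ⊤ = zpowers ((genD D'.1 D'.2.1, a'.1) : GG p P) :=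
        Subtype.ext_iff.mp h
      have hmem : ((genD D'.1 D'.2.1, a'.1) : GG p P) ∈ (⊥ : Subgroup P).prod ⊤ := by
        rw [h1]; exact mem_zpowers _
      have hg1 : genD D'.1 D'.2.1 = 1 := by simpa [mem_prod] using (mem_prod.mp hmem).1
      apply D'.2.2
      rw [← (genD_spec D'.1 D'.2.1).2, hg1, zpowers_eq_bot]
    · rfl
  · rintro ⟨H, hc, hn⟩
    obtain ⟨⟨x, a⟩, hxa, hgen⟩ := exists_zpowers_eq H hc
    have ha : a ≠ 1 := by
      rintro rfl
      exact hn (by rw [← hgen]; exact zpowers_le.mpr (mem_TT.mpr rfl))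
    by_cases hx : x = 1
    · refine ⟨Sum.inr Unit.unit, Subtype.ext ?_⟩
      show (⊥ : Subgroup P).prod ⊤ = H
      subst hx
      rw [← hgen]
      exact (zpowers_one_a hp ha).symm
    · have hDcyc : IsCyclic (zpowers x : Subgroup P) := isCyclic_zpowers' x
      have hDne : (zpowers x : Subgroup P) ≠ ⊥ := by simpa [Ne, zpowers_eq_bot] using hx
      set g := genD (zpowers x : Subgroup P) hDcyc with hgdef
      have hgspec := genD_spec (zpowers x : Subgroup P) hDcyc
      obtain ⟨j, hj⟩ := (Submonoid.mem_powers_iff _ _).mp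
        (mem_powers_iff_mem_zpowers.mpr hgspec.1)
      have hxmem : x ∈ zpowers g := by rw [hgspec.2]; exact mem_zpowers x
      obtain ⟨i, hi⟩ := (Submonoid.mem_powers_iff _ _).mp
        (mem_powers_iff_mem_zpowers.mpr hxmem)
      have hji : x ^ (j * i) = x ^ 1 := by rw [pow_mul, hj, hi, pow_one]
      have hmod : j * i ≡ 1 [MOD orderOf x] := pow_eq_pow_iff_modEq.mp hji
      have haj : a ^ j ≠ 1 := by
        intro h1
        have hpj : p ∣ j := (ordQ_eq hp ha) ▸ orderOf_dvd_of_pow_eq_one h1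
        exact modeq_contra hp hP hx hpj hmod
      refine ⟨Sum.inl (⟨zpowers x, hDcyc, hDne⟩, ⟨a ^ j, haj⟩), Subtype.ext ?_⟩
      show zpowers ((g, a ^ j) : GG p P) = H
      rw [← hgen]
      apply le_antisymm
      · rw [zpowers_le]
        have hm : ((x, a) : GG p P) ^ j ∈ zpowers ((x, a) : GG p P) :=
          Subgroup.pow_mem _ (mem_zpowers _) j
        rwa [Prod.pow_mk, hj] at hm
      · rw [zpowers_le]
        have hdvd : orderOf a ∣ orderOf x := (ordQ_dvd hp a).trans (p_dvd_orderOf hp hP hx)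
        have haji : a ^ (j * i) = a ^ 1 := pow_eq_pow_iff_modEq.mpr (hmod.of_dvd hdvd)
        have hm : ((g, a ^ j) : GG p P) ^ i ∈ zpowers ((g, a ^ j) : GG p P) :=
          Subgroup.pow_mem _ (mem_zpowers _) i
        rwa [Prod.pow_mk, hi, ← pow_mul, haji, pow_one] at hm

lemma piece2 (hp : p.Prime) (hP : IsPGroup p P) :
    Nat.card {H : Subgroup (GG p P) // IsCyclic H ∧ ¬ H ≤ TT p P}
      = Nat.card {D : Subgroup P // IsCyclic D ∧ D ≠ ⊥}
        * Nat.card {a : Multiplicative (ZMod p) // a ≠ 1} + 1 := by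
  haveI : NeZero p := ⟨hp.ne_zero⟩
  rw [← Nat.card_congr (Equiv.ofBijective _ (Fmap_bijective hp hP))]
  rw [Nat.card_sum, Nat.card_prod]
  simp

end F

end Stmt6Aux

theorem stmt6 (p : ℕ) (hp : p.Prime) (P : Type*) [Group P] [Finite P] [Nontrivial P]
    (hP : IsPGroup p P) (c l : ℕ) (hc : c = Nat.card {H : Subgroup P // IsCyclic H})
    (hl : l = Nat.card {H : Subgroup P // IsMaximalCyclic H}) :
    Nat.card {H : Subgroup (P × Multiplicative (ZMod p)) // IsMaximalCyclic H}
      = (p - 1) * (c - 1) + l + 1 := by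
  classical
  haveI := Fact.mk hp
  haveI : NeZero p := ⟨hp.ne_zero⟩
  have hsplit := Stmt6Aux.card_split (α := Subgroup (P × Multiplicative (ZMod p)))
      IsMaximalCyclic (fun H => H ≤ Stmt6Aux.TT p P)
  have h1 : Nat.card {H : Subgroup (P × Multiplicative (ZMod p)) //
      IsMaximalCyclic H ∧ H ≤ Stmt6Aux.TT p P} = l := by
    rw [hl]; exact Stmt6Aux.piece1 hp hP
  have hpred : ∀ H : Subgroup (P × Multiplicative (ZMod p)),
      (IsMaximalCyclic H ∧ ¬ H ≤ Stmt6Aux.TT p P) ↔ (IsCyclic H ∧ ¬ H ≤ Stmt6Aux.TT p P) :=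
    fun H => ⟨fun h => ⟨h.1.1, h.2⟩,
      fun h => ⟨Stmt6Aux.max_of_not_le_TT hp hP h.1 h.2, h.2⟩⟩
  have h2 : Nat.card {H : Subgroup (P × Multiplicative (ZMod p)) //
      IsMaximalCyclic H ∧ ¬ H ≤ Stmt6Aux.TT p P}
      = Nat.card {D : Subgroup P // IsCyclic D ∧ D ≠ ⊥}
        * Nat.card {a : Multiplicative (ZMod p) // a ≠ 1} + 1 := by
    rw [Nat.card_congr (Equiv.subtypeEquivRight hpred)]
    exact Stmt6Aux.piece2 hp hP
  have hQ : Nat.card {a : Multiplicative (ZMod p) // a ≠ 1} = p - 1 := by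
    have h3 := Stmt6Aux.card_split' (α := Multiplicative (ZMod p)) (fun a => a = 1)
    have h4 : Nat.card {a : Multiplicative (ZMod p) // a = 1} = 1 := by
      haveI : Unique {a : Multiplicative (ZMod p) // a = 1} :=
        ⟨⟨⟨1, rfl⟩⟩, fun x => Subtype.ext x.2⟩
      exact Nat.card_unique
    rw [Stmt6Aux.cardQ hp, h4] at h3
    have h5 : Nat.card {a : Multiplicative (ZMod p) // a ≠ 1}
        = Nat.card {a : Multiplicative (ZMod p) // ¬ a = 1} := rfl
    omega
  have hD : Nat.card {D : Subgroup P // IsCyclic D ∧ D ≠ ⊥} = c - 1 := by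
    have h3 := Stmt6Aux.card_split (α := Subgroup P)
      (fun D => IsCyclic D) (fun D => D = ⊥)
    have h4 : Nat.card {D : Subgroup P // IsCyclic D ∧ D = ⊥} = 1 := by
      haveI : Unique {D : Subgroup P // IsCyclic D ∧ D = ⊥} :=
        ⟨⟨⟨⊥, isCyclic_of_subsingleton, rfl⟩⟩, fun x => Subtype.ext x.2.2⟩
      exact Nat.card_unique
    have h5 : Nat.card {D : Subgroup P // IsCyclic D ∧ D ≠ ⊥}
        = Nat.card {D : Subgroup P // IsCyclic D ∧ ¬ D = ⊥} := rfl
    omega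
  rw [hsplit, h1, h2, hQ, hD]
  generalize (p - 1) = A
  generalize (c - 1) = B
  ring
end

section
/- For a prime p and a positive integer a, the group C_{p^a} × C_p has exactly ap+2 cyclic subgroups. -/
open Subgroup Multiplicative

section aux

lemma zpowers_pow_coprime {G : Type*} [Group G] {g : G} {m : ℕ}
    (h : Nat.Coprime m (orderOf g)) :
    Subgroup.zpowers (g ^ m) = Subgroup.zpowers g := by
  rcases Nat.lt_or_ge (orderOf g) 2 with h2 | h2
  · interval_cases h' : orderOf g
    · rw [Nat.coprime_zero_right] at h; rw [h, pow_one]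
    · rw [orderOf_eq_one_iff.mp h']; simp
  · apply le_antisymm
    · exact Subgroup.zpowers_le.mpr (Subgroup.pow_mem _ (Subgroup.mem_zpowers g) m)
    · refine Subgroup.zpowers_le.mpr ?_
      obtain ⟨n, -, hn⟩ := Nat.exists_mul_mod_eq_one_of_coprime h h2
      have key : (g ^ m) ^ n = g := by
        rw [← pow_mul, pow_eq_pow_iff_modEq.mpr ?_, pow_one]
        calc m * n ≡ m * n % orderOf g [MOD orderOf g] := (Nat.mod_modEq _ _).symm
          _ = 1 := hn
      have hmem : (g ^ m) ^ n ∈ Subgroup.zpowers (g ^ m) :=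
        Subgroup.pow_mem _ (Subgroup.mem_zpowers _) n
      rwa [key] at hmem

lemma isCyclic_zpowers {G : Type*} [Group G] (g : G) : IsCyclic (Subgroup.zpowers g) := by
  refine ⟨⟨⟨g, Subgroup.mem_zpowers g⟩, fun x => ?_⟩⟩
  obtain ⟨n, hn⟩ := Subgroup.mem_zpowers_iff.mp x.2
  exact Subgroup.mem_zpowers_iff.mpr ⟨n, Subtype.ext (by simpa using hn)⟩

lemma exists_zpowers {G : Type*} [Group G] {H : Subgroup G} (h : IsCyclic H) :
    ∃ g : G, H = Subgroup.zpowers g := by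
  obtain ⟨⟨g, hgH⟩, hg⟩ := @IsCyclic.exists_generator H _ h
  refine ⟨g, le_antisymm (fun x hx => ?_) (Subgroup.zpowers_le.mpr hgH)⟩
  obtain ⟨n, hn⟩ := Subgroup.mem_zpowers_iff.mp (hg ⟨x, hx⟩)
  exact Subgroup.mem_zpowers_iff.mpr ⟨n, by simpa using congrArg Subtype.val hn⟩

lemma addOrderOf_pow_cast {p a k : ℕ} (hp : p.Prime) (hk : k < a) :
    addOrderOf ((p ^ (a - 1 - k) : ℕ) : ZMod (p ^ a)) = p ^ (k + 1) := by
  rw [ZMod.addOrderOf_coe _ (pow_ne_zero a hp.pos.ne')]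
  rw [Nat.gcd_eq_right (pow_dvd_pow p (by omega))]
  rw [Nat.pow_div (by omega) hp.pos]
  congr 1
  omega

def gen' (p a : ℕ) (k : ℕ) (s : ZMod p) :
    Multiplicative (ZMod (p ^ a)) × Multiplicative (ZMod p) :=
  (Multiplicative.ofAdd ((p ^ (a - 1 - k) : ℕ) : ZMod (p ^ a)), Multiplicative.ofAdd s)

lemma orderOf_gen' {p a : ℕ} (hp : p.Prime) {k : ℕ} (hk : k < a) (s : ZMod p) :
    orderOf (gen' p a k s) = p ^ (k + 1) := by
  have h2 : addOrderOf s ∣ p :=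
    addOrderOf_dvd_of_nsmul_eq_zero (by simp [nsmul_eq_mul, ZMod.natCast_self])
  rw [gen', Prod.orderOf_mk, orderOf_ofAdd_eq_addOrderOf, orderOf_ofAdd_eq_addOrderOf,
    addOrderOf_pow_cast hp hk]
  exact Nat.dvd_antisymm
    (Nat.lcm_dvd dvd_rfl (h2.trans (dvd_pow_self p (Nat.succ_ne_zero k))))
    (Nat.dvd_lcm_left _ _)

end aux

theorem stmt7 (p a : ℕ) (hp : p.Prime) (ha : 0 < a) :
    Nat.card {H : Subgroup (Multiplicative (ZMod (p ^ a)) × Multiplicative (ZMod p)) //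
      IsCyclic H} = a * p + 2 := by
  haveI : Fact p.Prime := ⟨hp⟩
  haveI : NeZero (p ^ a) := ⟨pow_ne_zero a hp.pos.ne'⟩
  set w : Multiplicative (ZMod (p ^ a)) × Multiplicative (ZMod p) :=
    (1, Multiplicative.ofAdd (1 : ZMod p)) with hw
  have hword : orderOf w = p := by
    rw [hw, Prod.orderOf_mk, orderOf_one, orderOf_ofAdd_eq_addOrderOf, ZMod.addOrderOf_one,
      Nat.lcm_one_left]
  have hfst : ∀ k < a, ((p ^ (a - 1 - k) : ℕ) : ZMod (p ^ a)) ≠ 0 := by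
    intro k hk h
    rw [ZMod.natCast_eq_zero_iff] at h
    have := (Nat.pow_dvd_pow_iff_le_right hp.one_lt).mp h
    omega
  let F : Option (Option (Fin a × ZMod p)) →
      {H : Subgroup (Multiplicative (ZMod (p ^ a)) × Multiplicative (ZMod p)) // IsCyclic H} :=
    fun o => match o with
    | none => ⟨⊥, inferInstance⟩
    | some none => ⟨Subgroup.zpowers w, _root_.isCyclic_zpowers _⟩
    | some (some (k, s)) => ⟨Subgroup.zpowers (gen' p a k s), _root_.isCyclic_zpowers _⟩
  have hbij : Function.Bijective F := by
    constructor
    · have wgen : ∀ k < a, ∀ s : ZMod p, gen' p a k s ∉ Subgroup.zpowers w := by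
        intro k hk s hmem
        obtain ⟨n, hn⟩ := Subgroup.mem_zpowers_iff.mp hmem
        have h1 := congrArg Prod.fst hn
        simp [hw, gen'] at h1
        exact hfst k hk (by push_cast; exact ofAdd_eq_one.mp h1.symm)
      intro o1 o2 h
      rw [Subtype.ext_iff] at h
      have hcard : Nat.card (F o1).1 = Nat.card (F o2).1 := by rw [h]
      have hpow1 : ∀ k : ℕ, 1 < p ^ (k + 1) := fun k => Nat.one_lt_pow (Nat.succ_ne_zero k) hp.one_lt
      match o1, o2 with
      | none, none => rfl
      | none, some none =>
        rw [show (F none).1 = ⊥ from rfl, show (F (some none)).1 = Subgroup.zpowers w from rfl,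
          Subgroup.card_bot, Nat.card_zpowers, hword] at hcard
        exact absurd hcard.symm hp.ne_one
      | some none, none =>
        rw [show (F none).1 = ⊥ from rfl, show (F (some none)).1 = Subgroup.zpowers w from rfl,
          Subgroup.card_bot, Nat.card_zpowers, hword] at hcard
        exact absurd hcard hp.ne_one
      | none, some (some (k, s)) =>
        rw [show (F none).1 = ⊥ from rfl,
          show (F (some (some (k, s)))).1 = Subgroup.zpowers (gen' p a k s) from rfl,
          Subgroup.card_bot, Nat.card_zpowers, orderOf_gen' hp k.isLt] at hcard
        exact absurd hcard.symm (hpow1 k).ne'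
      | some (some (k, s)), none =>
        rw [show (F none).1 = ⊥ from rfl,
          show (F (some (some (k, s)))).1 = Subgroup.zpowers (gen' p a k s) from rfl,
          Subgroup.card_bot, Nat.card_zpowers, orderOf_gen' hp k.isLt] at hcard
        exact absurd hcard (hpow1 k).ne'
      | some none, some none => rfl
      | some none, some (some (k, s)) =>
        have h' : Subgroup.zpowers w = Subgroup.zpowers (gen' p a (k : ℕ) s) := h
        exact absurd (h' ▸ Subgroup.mem_zpowers (gen' p a (k : ℕ) s)) (wgen k k.isLt s)
      | some (some (k, s)), some none =>
        have h' : Subgroup.zpowers (gen' p a (k : ℕ) s) = Subgroup.zpowers w := h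
        exact absurd (h' ▸ Subgroup.mem_zpowers (gen' p a (k : ℕ) s)) (wgen k k.isLt s)
      | some (some (k, s)), some (some (k', s')) =>
        have hkk : k = k' := by
          rw [show (F (some (some (k, s)))).1 = Subgroup.zpowers (gen' p a k s) from rfl,
            show (F (some (some (k', s')))).1 = Subgroup.zpowers (gen' p a k' s') from rfl,
            Nat.card_zpowers, Nat.card_zpowers, orderOf_gen' hp k.isLt,
            orderOf_gen' hp k'.isLt] at hcard
          exact Fin.ext (Nat.succ_injective (Nat.pow_right_injective hp.two_le hcard))
        subst hkk
        have hmem : gen' p a k s ∈ Subgroup.zpowers (gen' p a (k : ℕ) s') := by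
          rw [show Subgroup.zpowers (gen' p a (k:ℕ) s') = (F (some (some (k, s')))).1 from rfl, ← h]
          exact Subgroup.mem_zpowers _
        obtain ⟨n, hn⟩ := Subgroup.mem_zpowers_iff.mp hmem
        have h1 := congrArg Prod.fst hn
        have h2 := congrArg Prod.snd hn
        simp only [gen', Prod.pow_fst, Prod.pow_snd, ← ofAdd_zsmul,
          EmbeddingLike.apply_eq_iff_eq] at h1 h2
        have hd : (addOrderOf ((p ^ (a - 1 - (k:ℕ)) : ℕ) : ZMod (p ^ a)) : ℤ) ∣ n - 1 := by
          rw [addOrderOf_dvd_iff_zsmul_eq_zero, sub_zsmul, one_zsmul, h1]; simp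
        rw [addOrderOf_pow_cast hp k.isLt] at hd
        have hdp : (p : ℤ) ∣ n - 1 := by
          refine dvd_trans ?_ hd
          exact_mod_cast dvd_pow_self (p : ℤ) (Nat.succ_ne_zero (k:ℕ))
        have hn1 : (n : ZMod p) = 1 := by
          have := (ZMod.intCast_zmod_eq_zero_iff_dvd (n - 1) p).mpr hdp
          push_cast at this
          exact sub_eq_zero.mp this
        have : s = s' := by
          rw [← h2, zsmul_eq_mul, hn1, one_mul]
        rw [this]
    · rintro ⟨H, hH⟩
      obtain ⟨g, rfl⟩ := exists_zpowers hH
      by_cases hx : toAdd g.1 = 0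
      · by_cases hy : toAdd g.2 = 0
        · refine ⟨none, Subtype.ext ?_⟩
          show (⊥ : Subgroup _) = Subgroup.zpowers g
          have hg1 : g = 1 := Prod.ext (toAdd_eq_zero.mp hx) (toAdd_eq_zero.mp hy)
          rw [hg1]
          exact (Subgroup.zpowers_eq_bot.mpr rfl).symm
        · refine ⟨some none, Subtype.ext ?_⟩
          show Subgroup.zpowers w = Subgroup.zpowers g
          have hg1 : g.1 = 1 := toAdd_eq_zero.mp hx
          apply le_antisymm
          · refine Subgroup.zpowers_le.mpr
              (Subgroup.mem_zpowers_iff.mpr ⟨(((toAdd g.2)⁻¹).val : ℤ), ?_⟩)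
            refine Prod.ext ?_ ?_
            · rw [Prod.pow_fst, hg1, one_zpow]
            · rw [Prod.pow_snd]
              show g.2 ^ (((toAdd g.2)⁻¹).val : ℤ) = ofAdd (1 : ZMod p)
              conv_lhs => rw [show g.2 = ofAdd (toAdd g.2) from rfl]
              rw [← ofAdd_zsmul, zsmul_eq_mul]
              congr 1
              push_cast
              rw [ZMod.natCast_val, ZMod.cast_id]
              exact inv_mul_cancel₀ hy
          · refine Subgroup.zpowers_le.mpr
              (Subgroup.mem_zpowers_iff.mpr ⟨((toAdd g.2).val : ℤ), ?_⟩)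
            refine Prod.ext ?_ ?_
            · rw [Prod.pow_fst]
              show (1 : Multiplicative (ZMod (p ^ a))) ^ ((toAdd g.2).val : ℤ) = g.1
              rw [one_zpow, hg1]
            · rw [Prod.pow_snd]
              show (ofAdd (1 : ZMod p)) ^ ((toAdd g.2).val : ℤ) = g.2
              rw [← ofAdd_zsmul, zsmul_eq_mul, mul_one]
              push_cast
              rw [ZMod.natCast_val, ZMod.cast_id]
              rfl
      · -- main case: first coordinate nonzero
        set x : ZMod (p ^ a) := toAdd g.1 with hxdef
        set v : ℕ := x.val with hvdef
        have hv0 : v ≠ 0 := fun h => hx ((ZMod.val_eq_zero x).mp h)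
        set j : ℕ := v.factorization p with hjdef
        set c : ℕ := v / p ^ j with hcdef
        have hvc : p ^ j * c = v := Nat.ordProj_mul_ordCompl_eq_self v p
        have hpc : ¬ p ∣ c := Nat.not_dvd_ordCompl hp hv0
        have hj : j < a := by
          have h1 : p ^ j ≤ v := Nat.ordProj_le p hv0
          have h2 : v < p ^ a := ZMod.val_lt x
          exact (Nat.pow_lt_pow_iff_right hp.one_lt).mp (lt_of_le_of_lt h1 h2)
        set k : ℕ := a - 1 - j with hkdef
        have hk : k < a := by omega
        have hjk : a - 1 - k = j := by omega
        set m : ℕ := ((c : ZMod (p ^ a))⁻¹).val with hmdef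
        have hcop' : Nat.Coprime c (p ^ a) :=
          ((Nat.Prime.coprime_iff_not_dvd hp).mpr hpc).symm.pow_right a
        have hmc : (m : ZMod (p ^ a)) * (c : ZMod (p ^ a)) = 1 := by
          rw [hmdef, ZMod.natCast_val, ZMod.cast_id, mul_comm]
          exact ZMod.coe_mul_inv_eq_one c hcop'
        have hpm : ¬ p ∣ m := by
          intro hdvd
          have hcast := congrArg (ZMod.castHom (dvd_pow_self p ha.ne') (ZMod p)) hmc
          rw [map_mul, map_one, map_natCast, map_natCast,
            (ZMod.natCast_eq_zero_iff m p).mpr hdvd, zero_mul] at hcast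
          exact zero_ne_one hcast
        have hcop : Nat.Coprime m (orderOf g) := by
          have hdvd : orderOf g ∣ p ^ (a + 1) := by
            have h1 := orderOf_dvd_natCard g
            have h2 : Nat.card (Multiplicative (ZMod (p ^ a)) × Multiplicative (ZMod p))
                = p ^ (a + 1) := by
              rw [Nat.card_prod, Nat.card_congr Multiplicative.toAdd,
                Nat.card_congr Multiplicative.toAdd, Nat.card_zmod, Nat.card_zmod, pow_succ]
            rwa [h2] at h1
          exact Nat.Coprime.coprime_dvd_right hdvd
            (((hp.coprime_iff_not_dvd).mpr hpm).symm.pow_right (a + 1))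
        refine ⟨some (some (⟨k, hk⟩, (m : ZMod p) * toAdd g.2)), Subtype.ext ?_⟩
        show Subgroup.zpowers (gen' p a k ((m : ZMod p) * toAdd g.2)) = Subgroup.zpowers g
        have hxv : ((p ^ j * c : ℕ) : ZMod (p ^ a)) = x := by
          rw [hvc, hvdef, ZMod.natCast_val, ZMod.cast_id]
        have hgm : g ^ m = gen' p a k ((m : ZMod p) * toAdd g.2) := by
          refine Prod.ext ?_ ?_
          · rw [Prod.pow_fst]
            show g.1 ^ m = ofAdd ((p ^ (a - 1 - k) : ℕ) : ZMod (p ^ a))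
            conv_lhs => rw [show g.1 = ofAdd x from rfl]
            rw [← ofAdd_nsmul]
            congr 1
            rw [nsmul_eq_mul, hjk, ← hxv]
            push_cast
            linear_combination ((p : ZMod (p ^ a)) ^ j) * hmc
          · rw [Prod.pow_snd]
            show g.2 ^ m = ofAdd ((m : ZMod p) * toAdd g.2)
            conv_lhs => rw [show g.2 = ofAdd (toAdd g.2) from rfl]
            rw [← ofAdd_nsmul]
            congr 1
            rw [nsmul_eq_mul]
        rw [← hgm, zpowers_pow_coprime hcop]
  rw [← Nat.card_eq_of_bijective F hbij]
  haveI : NeZero p := ⟨hp.pos.ne'⟩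
  simp [Nat.card_eq_fintype_card]
end

section
/- For a prime p and a positive integer a, the group C_{p^a} × C_p has exactly ap−a+2 maximal cyclic subgroups. -/
open Subgroup

-- L1: cyclic subgroup is zpowers
theorem aux_cyclic_eq_zpowers {G : Type*} [Group G] (H : Subgroup G) (h : IsCyclic H) :
    ∃ g : G, H = Subgroup.zpowers g := by
  obtain ⟨⟨g, hgH⟩, hg⟩ := h.exists_generator
  refine ⟨g, le_antisymm ?_ ?_⟩
  · intro x hx
    obtain ⟨n, hn⟩ := hg ⟨x, hx⟩
    have : (⟨g, hgH⟩ : H) ^ n = ⟨x, hx⟩ := hn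
    refine ⟨n, ?_⟩
    have := congrArg (Subtype.val) this
    simpa using this
  · exact zpowers_le.2 hgH

-- L0: change of generator
theorem aux_zpowers_pow_eq {G : Type*} [Group G] [Finite G] (g : G) {k : ℕ}
    (h : Nat.Coprime k (orderOf g)) : Subgroup.zpowers (g ^ k) = Subgroup.zpowers g := by
  refine le_antisymm (zpowers_le.2 ⟨(k:ℤ), by simp⟩) ?_
  refine zpowers_le.2 ?_
  rcases eq_or_ne (orderOf g) 1 with h1 | h1
  · simp [orderOf_eq_one_iff.1 h1]
  obtain ⟨m, -, hm⟩ := Nat.exists_mul_mod_eq_one_of_coprime h (by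
    have := orderOf_pos g; omega)
  have : (g ^ k) ^ m = g := by
    rw [← pow_mul, ← pow_mod_orderOf, hm, pow_one]
  exact ⟨(m:ℤ), by simpa using this⟩


-- order of any element is a p-power
theorem aux_isCyclic_zpowers {G : Type*} [Group G] (g : G) : IsCyclic (zpowers g) := by
  refine ⟨⟨⟨g, mem_zpowers g⟩, ?_⟩⟩
  rintro ⟨x, n, rfl⟩
  exact ⟨n, Subtype.ext (by simp)⟩

theorem aux_mem_pow {G : Type*} [Group G] [Finite G] {g x : G} (h : x ∈ zpowers g) :
    ∃ m : ℕ, g ^ m = x := by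
  have := ((isOfFinOrder_of_finite g).mem_powers_iff_mem_zpowers).2 h
  exact (Submonoid.mem_powers_iff _ _).1 this

theorem aux_orderOf_pp {G : Type*} [Group G] {p : ℕ} (hp : p.Prime) (hG : IsPGroup p G)
    (g : G) : ∃ j, orderOf g = p ^ j := by
  obtain ⟨k, hk⟩ := hG g
  have : orderOf g ∣ p ^ k := orderOf_dvd_of_pow_eq_one hk
  exact (Nat.dvd_prime_pow hp).1 this |>.imp fun j h => h.2

theorem aux_maximal_of_not_pow {G : Type*} [Group G] [Finite G] {p : ℕ} (hp : p.Prime)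
    (hG : IsPGroup p G) (g : G) (hg : ¬ ∃ h : G, h ^ p = g) :
    IsMaximalCyclic (Subgroup.zpowers g) := by
  constructor
  · exact aux_isCyclic_zpowers g
  · intro K hK hle
    obtain ⟨h, rfl⟩ := aux_cyclic_eq_zpowers K hK
    have hgK : g ∈ zpowers h := hle (mem_zpowers g)
    obtain ⟨m, hm⟩ := aux_mem_pow hgK
    by_cases hdvd : p ∣ m
    · exfalso
      obtain ⟨c, rfl⟩ := hdvd
      exact hg ⟨h ^ c, by rw [← pow_mul, mul_comm]; exact hm⟩
    · rw [← hm]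
      refine aux_zpowers_pow_eq h ?_
      obtain ⟨j, hj⟩ := aux_orderOf_pp hp hG h
      rw [hj]
      exact ((Nat.Prime.coprime_iff_not_dvd hp).2 hdvd).symm.pow_right j

theorem aux_maximal_exists_gen {G : Type*} [Group G] [Finite G] {p : ℕ} (hp : p.Prime)
    (hG : IsPGroup p G) (hnt : ∃ x : G, x ≠ 1) (H : Subgroup G) (hH : IsMaximalCyclic H) :
    ∃ g : G, (¬ ∃ h : G, h ^ p = g) ∧ H = Subgroup.zpowers g := by
  obtain ⟨g, rfl⟩ := aux_cyclic_eq_zpowers H hH.1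
  refine ⟨g, ?_, rfl⟩
  rintro ⟨h, rfl⟩
  have heq : zpowers (h ^ p) = zpowers h := by
    refine hH.2 _ (aux_isCyclic_zpowers h) (zpowers_le.2 ⟨(p:ℤ), by simp⟩)
  have hh : h ∈ zpowers (h ^ p) := heq ▸ mem_zpowers h
  obtain ⟨m, hm⟩ := aux_mem_pow hh
  -- h^(p*m) = h, so orderOf h ∣ p*m - 1, hence p ∤ orderOf h, so orderOf h = 1
  have h1 : h = 1 := by
    rcases Nat.eq_zero_or_pos m with rfl | hmpos
    · simpa using hm.symm
    have : orderOf h ∣ p * m - 1 := by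
      have : h ^ (p * m) = h ^ 1 := by rw [pow_mul]; simpa using hm
      have := pow_eq_pow_iff_modEq.1 this
      have h2 := (Nat.modEq_iff_dvd' (by nlinarith [hp.two_le])).1 this.symm
      exact h2
    obtain ⟨j, hj⟩ := aux_orderOf_pp hp hG h
    have hpd : ¬ p ∣ p * m - 1 := by
      intro hd
      have h1 : p ∣ p * m := Dvd.intro m rfl
      have hge : 1 ≤ p * m := by nlinarith [hp.two_le]
      have : p ∣ 1 := by
        have := Nat.dvd_sub h1 hd
        simpa [Nat.sub_sub_self hge] using this
      have := Nat.le_of_dvd one_pos this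
      have := hp.two_le
      omega
    rcases Nat.eq_zero_or_pos j with rfl | hj1
    · simpa [pow_zero, orderOf_eq_one_iff] using hj
    · exact absurd (dvd_trans (dvd_pow_self p hj1.ne') (hj ▸ this)) hpd
  -- then g = h^p = 1, H = ⊥, contradiction with hnt via maximality
  obtain ⟨x, hx⟩ := hnt
  have hb : zpowers (h ^ p) = ⊥ := by simp [h1]
  have := hH.2 (zpowers x) (aux_isCyclic_zpowers x) (by rw [hb]; exact bot_le)
  rw [hb] at this
  exact hx (by simpa using (this ▸ mem_zpowers x : x ∈ (⊥ : Subgroup G)))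

variable {p a : ℕ}


variable {p a : ℕ}

theorem aux_zpow (x : ZMod (p^a)) (y : ZMod p) (k : ℤ) :
    ((Multiplicative.ofAdd x, Multiplicative.ofAdd y) :
      Multiplicative (ZMod (p^a)) × Multiplicative (ZMod p)) ^ k
    = (Multiplicative.ofAdd ((k : ZMod (p^a)) * x), Multiplicative.ofAdd ((k : ZMod p) * y)) := by
  simp [Prod.pow_def, ← ofAdd_zsmul, zsmul_eq_mul]

theorem aux_pow (x : ZMod (p^a)) (y : ZMod p) (k : ℕ) :
    ((Multiplicative.ofAdd x, Multiplicative.ofAdd y) :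
      Multiplicative (ZMod (p^a)) × Multiplicative (ZMod p)) ^ k
    = (Multiplicative.ofAdd ((k : ZMod (p^a)) * x), Multiplicative.ofAdd ((k : ZMod p) * y)) := by
  have := aux_zpow x y (k : ℤ)
  simpa using this

theorem aux_mem_iff (hp : p.Prime) (ha : 0 < a) (x x' : ZMod (p^a)) (y y' : ZMod p) :
    ((Multiplicative.ofAdd x', Multiplicative.ofAdd y') :
      Multiplicative (ZMod (p^a)) × Multiplicative (ZMod p)) ∈
      Subgroup.zpowers (Multiplicative.ofAdd x, Multiplicative.ofAdd y) ↔
    ∃ c : ZMod (p^a), c * x = x' ∧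
      (ZMod.castHom (dvd_pow_self p ha.ne') (ZMod p) c) * y = y' := by
  haveI : NeZero (p ^ a) := ⟨pow_ne_zero a hp.ne_zero⟩
  constructor
  · rintro ⟨k, hk⟩
    simp only [] at hk
    rw [aux_zpow] at hk
    refine ⟨(k : ZMod (p^a)), ?_, ?_⟩
    · exact (congrArg (Multiplicative.toAdd ∘ Prod.fst) hk :)
    · have h2 : ((k : ZMod p)) * y = y' := (congrArg (Multiplicative.toAdd ∘ Prod.snd) hk :)
      rwa [← map_intCast (ZMod.castHom (dvd_pow_self p ha.ne') (ZMod p)) k] at h2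
  · rintro ⟨c, h1, h2⟩
    refine ⟨(c.val : ℤ), ?_⟩
    show _ ^ _ = _
    rw [aux_zpow]
    have hc : ((c.val : ℤ) : ZMod (p^a)) = c := by
      rw [Int.cast_natCast, ZMod.natCast_val, ZMod.cast_id]
    have hc2 : ((c.val : ℤ) : ZMod p) = (ZMod.castHom (dvd_pow_self p ha.ne') (ZMod p)) c := by
      rw [Int.cast_natCast, ZMod.castHom_apply, ZMod.natCast_val]
    rw [hc, hc2, h1, h2]

theorem aux_ppow_iff (hp : p.Prime) (ha : 0 < a) (x : ZMod (p^a)) (y : ZMod p) :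
    (∃ h : Multiplicative (ZMod (p^a)) × Multiplicative (ZMod p),
      h ^ p = (Multiplicative.ofAdd x, Multiplicative.ofAdd y)) ↔ (p ∣ x.val ∧ y = 0) := by
  haveI : NeZero (p ^ a) := ⟨pow_ne_zero a hp.ne_zero⟩
  constructor
  · rintro ⟨⟨u, v⟩, hu⟩
    have hu' : (Multiplicative.ofAdd u.toAdd, Multiplicative.ofAdd v.toAdd) ^ p
        = (Multiplicative.ofAdd x, Multiplicative.ofAdd y) := by simpa using hu
    rw [aux_pow] at hu'
    have h1 : (p : ZMod (p^a)) * u.toAdd = x := (congrArg (Multiplicative.toAdd ∘ Prod.fst) hu' :)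
    have h2 : (p : ZMod p) * v.toAdd = y := (congrArg (Multiplicative.toAdd ∘ Prod.snd) hu' :)
    constructor
    · have : x = ((p * u.toAdd.val : ℕ) : ZMod (p^a)) := by
        push_cast
        rw [ZMod.natCast_val, ZMod.cast_id, h1]
      rw [this, ZMod.val_natCast]
      exact (Nat.dvd_mod_iff (dvd_pow_self p ha.ne')).2 ⟨u.toAdd.val, rfl⟩
    · rw [← h2, ZMod.natCast_self, zero_mul]
  · rintro ⟨⟨m, hm⟩, rfl⟩
    refine ⟨(Multiplicative.ofAdd ((m : ℕ) : ZMod (p^a)), Multiplicative.ofAdd (0 : ZMod p)), ?_⟩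
    rw [aux_pow]
    have : (p : ZMod (p^a)) * ((m : ℕ) : ZMod (p^a)) = x := by
      rw [← Nat.cast_mul, ← hm, ZMod.natCast_val, ZMod.cast_id]
    rw [this, mul_zero]

theorem aux_cast_pow_ne (hp : p.Prime) {t : ℕ} (ht : t < a) :
    ((p^t : ℕ) : ZMod (p^a)) ≠ 0 := by
  rw [Ne, ZMod.natCast_eq_zero_iff]
  intro h
  have := Nat.le_of_dvd (pow_pos hp.pos t) h
  exact absurd this (not_le.2 (Nat.pow_lt_pow_right hp.one_lt ht))

theorem aux_val_le (hp : p.Prime) {s t : ℕ} (ht : t < a) (c : ZMod (p^a))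
    (h : c * ((p^s : ℕ) : ZMod (p^a)) = ((p^t : ℕ) : ZMod (p^a))) : s ≤ t := by
  haveI : NeZero (p ^ a) := ⟨pow_ne_zero a hp.ne_zero⟩
  by_contra hst
  push_neg at hst  -- t < s
  have hmod : (c.val * p ^ s) % p ^ a = p ^ t % p ^ a := by
    have : ((c.val * p ^ s : ℕ) : ZMod (p^a)) = ((p^t : ℕ) : ZMod (p^a)) := by
      rw [Nat.cast_mul, ZMod.natCast_val, ZMod.cast_id, h]
    exact (ZMod.natCast_eq_natCast_iff' _ _ _).1 this
  have hlt : p ^ t % p ^ a = p ^ t := Nat.mod_eq_of_lt (Nat.pow_lt_pow_right hp.one_lt ht)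
  have hdvd : p ^ (t+1) ∣ (c.val * p ^ s) % p ^ a := by
    refine (Nat.dvd_mod_iff (pow_dvd_pow p (by omega))).2 ?_
    exact Dvd.dvd.mul_left (pow_dvd_pow p (by omega)) _
  rw [hmod, hlt] at hdvd
  have := Nat.le_of_dvd (pow_pos hp.pos t) hdvd
  exact absurd this (not_le.2 (Nat.pow_lt_pow_right hp.one_lt (by omega)))

theorem aux_cast_one (hp : p.Prime) (ha : 0 < a) {s : ℕ} (hs : s < a) (c : ZMod (p^a))
    (h : c * ((p^s : ℕ) : ZMod (p^a)) = ((p^s : ℕ) : ZMod (p^a))) :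
    (ZMod.castHom (dvd_pow_self p ha.ne') (ZMod p) c) = 1 := by
  haveI : NeZero (p ^ a) := ⟨pow_ne_zero a hp.ne_zero⟩
  have hmod : (c.val * p ^ s) % p ^ a = p ^ s % p ^ a := by
    have : ((c.val * p ^ s : ℕ) : ZMod (p^a)) = ((p^s : ℕ) : ZMod (p^a)) := by
      rw [Nat.cast_mul, ZMod.natCast_val, ZMod.cast_id, h]
    exact (ZMod.natCast_eq_natCast_iff' _ _ _).1 this
  -- go to ℤ
  have hZ : ((p:ℤ) ^ a) ∣ (c.val : ℤ) * p ^ s - p ^ s := by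
    have := (Nat.modEq_iff_dvd (n := p^a)).1 hmod
    push_cast at this ⊢
    exact dvd_sub_comm.mp this
  have hfac : ((p:ℤ))^s * (((c.val : ℤ) - 1)) = (c.val : ℤ) * p ^ s - p ^ s := by ring
  have hdvd : ((p:ℤ))^(s+1) ∣ (p:ℤ)^s * ((c.val : ℤ) - 1) := by
    rw [hfac]
    exact dvd_trans (pow_dvd_pow _ (by omega)) hZ
  have hp1 : (p:ℤ) ∣ (c.val : ℤ) - 1 := by
    have hne : ((p:ℤ))^s ≠ 0 := pow_ne_zero s (by exact_mod_cast hp.ne_zero)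
    rw [pow_succ] at hdvd
    exact (mul_dvd_mul_iff_left hne).1 hdvd
  -- conclude
  rw [ZMod.castHom_apply, ← ZMod.natCast_val]
  have h0 : (((c.val : ℤ) - 1 : ℤ) : ZMod p) = 0 := by
    rw [ZMod.intCast_zmod_eq_zero_iff_dvd]
    exact_mod_cast hp1
  push_cast at h0
  linear_combination h0

theorem aux_inj (hp : p.Prime) (ha : 0 < a) {s t : ℕ} (hs : s ≤ a) (ht : t ≤ a)
    {y z : ZMod p} (hys : s = a → y = 1) (hzt : t = a → z = 1)
    (h : Subgroup.zpowers
        ((Multiplicative.ofAdd ((p^s : ℕ) : ZMod (p^a)), Multiplicative.ofAdd y) :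
          Multiplicative (ZMod (p^a)) × Multiplicative (ZMod p)) =
      Subgroup.zpowers (Multiplicative.ofAdd ((p^t : ℕ) : ZMod (p^a)), Multiplicative.ofAdd z)) :
    s = t ∧ y = z := by
  have h1 := h ▸ mem_zpowers
    ((Multiplicative.ofAdd ((p^s : ℕ) : ZMod (p^a)), Multiplicative.ofAdd y) :
      Multiplicative (ZMod (p^a)) × Multiplicative (ZMod p))
  have h2 := h.symm ▸ mem_zpowers
    ((Multiplicative.ofAdd ((p^t : ℕ) : ZMod (p^a)), Multiplicative.ofAdd z) :
      Multiplicative (ZMod (p^a)) × Multiplicative (ZMod p))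
  obtain ⟨c, hc1, hc2⟩ := (aux_mem_iff hp ha _ _ _ _).1 h2
  obtain ⟨d, hd1, hd2⟩ := (aux_mem_iff hp ha _ _ _ _).1 h1
  by_cases hsa : s = a
  · by_cases hta : t = a
    · exact ⟨hsa.trans hta.symm, (hys hsa).trans (hzt hta).symm⟩
    · exfalso
      subst hsa
      rw [ZMod.natCast_self] at hc1
      rw [mul_zero] at hc1
      exact aux_cast_pow_ne hp (lt_of_le_of_ne ht hta) hc1.symm
  · by_cases hta : t = a
    · exfalso
      subst hta
      rw [ZMod.natCast_self] at hd1
      rw [mul_zero] at hd1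
      exact aux_cast_pow_ne hp (lt_of_le_of_ne hs hsa) hd1.symm
    · have hst : s = t := le_antisymm
        (aux_val_le hp (lt_of_le_of_ne ht hta) c hc1)
        (aux_val_le hp (lt_of_le_of_ne hs hsa) d hd1)
      refine ⟨hst, ?_⟩
      subst hst
      have := aux_cast_one hp ha (lt_of_le_of_ne hs hsa) c hc1
      rw [this, one_mul] at hc2
      exact hc2

theorem aux_pgroup (hp : p.Prime) :
    IsPGroup p (Multiplicative (ZMod (p^a)) × Multiplicative (ZMod p)) := by
  refine IsPGroup.of_card (n := a + 1) ?_
  rw [Nat.card_prod, Nat.card_congr Multiplicative.toAdd, Nat.card_congr Multiplicative.toAdd,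
    Nat.card_zmod, Nat.card_zmod, pow_succ]

theorem aux_norm (hp : p.Prime) (ha : 0 < a) (x : ZMod (p^a)) (y : ZMod p) {k : ℕ}
    (hk : ¬ p ∣ k) :
    Subgroup.zpowers ((Multiplicative.ofAdd x, Multiplicative.ofAdd y) :
        Multiplicative (ZMod (p^a)) × Multiplicative (ZMod p)) =
      Subgroup.zpowers (Multiplicative.ofAdd ((k : ZMod (p^a)) * x),
        Multiplicative.ofAdd ((k : ZMod p) * y)) := by
  haveI : NeZero (p ^ a) := ⟨pow_ne_zero a hp.ne_zero⟩
  haveI : NeZero p := ⟨hp.ne_zero⟩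
  haveI : Fintype (ZMod (p^a)) := ZMod.fintype _
  haveI : Fintype (ZMod p) := ZMod.fintype _
  haveI : Finite (Multiplicative (ZMod (p^a)) × Multiplicative (ZMod p)) :=
    Finite.of_equiv (ZMod (p^a) × ZMod p)
      (Equiv.prodCongr Multiplicative.ofAdd Multiplicative.ofAdd)
  rw [← aux_pow]
  refine (aux_zpowers_pow_eq _ ?_).symm
  obtain ⟨j, hj⟩ := aux_orderOf_pp hp (aux_pgroup hp)
    ((Multiplicative.ofAdd x, Multiplicative.ofAdd y) :
      Multiplicative (ZMod (p^a)) × Multiplicative (ZMod p))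
  rw [hj]
  exact ((Nat.Prime.coprime_iff_not_dvd hp).2 hk).symm.pow_right j

theorem aux_classify (hp : p.Prime) (ha : 0 < a)
    (H : Subgroup (Multiplicative (ZMod (p^a)) × Multiplicative (ZMod p)))
    (hH : IsMaximalCyclic H) :
    ∃ (s : ℕ) (y : ZMod p), s ≤ a ∧ (s = a → y = 1) ∧ (1 ≤ s → y ≠ 0) ∧
      H = Subgroup.zpowers (Multiplicative.ofAdd ((p^s : ℕ) : ZMod (p^a)),
        Multiplicative.ofAdd y) := by
  haveI : NeZero (p ^ a) := ⟨pow_ne_zero a hp.ne_zero⟩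
  haveI : NeZero p := ⟨hp.ne_zero⟩
  haveI : Fact p.Prime := ⟨hp⟩
  haveI : Fintype (ZMod (p^a)) := ZMod.fintype _
  haveI : Fintype (ZMod p) := ZMod.fintype _
  haveI : Finite (Multiplicative (ZMod (p^a)) × Multiplicative (ZMod p)) :=
    Finite.of_equiv (ZMod (p^a) × ZMod p)
      (Equiv.prodCongr Multiplicative.ofAdd Multiplicative.ofAdd)
  have hnt : ∃ x : Multiplicative (ZMod (p^a)) × Multiplicative (ZMod p), x ≠ 1 := by
    refine ⟨(1, Multiplicative.ofAdd (1 : ZMod p)), ?_⟩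
    intro hcon
    have : (Multiplicative.ofAdd (1 : ZMod p)) = 1 := congrArg Prod.snd hcon
    have : (1 : ZMod p) = 0 := this
    exact one_ne_zero this
  obtain ⟨g, hng, rfl⟩ := aux_maximal_exists_gen hp (aux_pgroup hp) hnt H hH
  obtain ⟨g1, g2⟩ := g
  set x : ZMod (p^a) := g1.toAdd with hx
  set y0 : ZMod p := g2.toAdd with hy0
  have hge : (g1, g2) = (Multiplicative.ofAdd x, Multiplicative.ofAdd y0) := rfl
  rw [hge] at hng ⊢
  rw [aux_ppow_iff hp ha] at hng
  push_neg at hng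
  by_cases hdx : p ∣ x.val
  · have hy0ne : y0 ≠ 0 := hng hdx
    by_cases hx0 : x = 0
    · -- s = a case
      have hcop : Nat.Coprime y0.val p := by
        refine (Nat.coprime_comm.1 ((hp.coprime_iff_not_dvd).2 ?_))
        intro hd
        have := ZMod.val_lt y0
        have hvne : y0.val ≠ 0 := fun h => hy0ne (by
          rwa [← ZMod.val_eq_zero])
        have := Nat.le_of_dvd (Nat.pos_of_ne_zero hvne) hd
        omega
      obtain ⟨k, -, hk⟩ := Nat.exists_mul_mod_eq_one_of_coprime hcop hp.one_lt
      have hpk : ¬ p ∣ k := by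
        intro hd
        have h1 : p ∣ y0.val * k := Dvd.dvd.mul_left hd _
        have : p ∣ y0.val * k % p := (Nat.dvd_mod_iff dvd_rfl).2 h1
        rw [hk] at this
        exact absurd (Nat.le_of_dvd one_pos this) (by have := hp.two_le; omega)
      refine ⟨a, 1, le_rfl, fun _ => rfl, fun _ => one_ne_zero, ?_⟩
      rw [aux_norm hp ha x y0 hpk]
      congr 1
      rw [hx0, mul_zero, ZMod.natCast_self]
      have : ((k : ZMod p)) * y0 = 1 := by
        have h2 : ((y0.val * k : ℕ) : ZMod p) = 1 := by
          rw [← ZMod.natCast_mod, hk, Nat.cast_one]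
        rw [← h2, Nat.cast_mul, ZMod.natCast_val, ZMod.cast_id, mul_comm]
      rw [this]
    · -- 1 ≤ s < a case
      have hvne : x.val ≠ 0 := fun h => hx0 (by rwa [← ZMod.val_eq_zero])
      set s : ℕ := x.val.factorization p with hsdef
      have hs1 : 0 < s := hp.factorization_pos_of_dvd hvne hdx
      have hps : p ^ s ∣ x.val := Nat.ordProj_dvd _ _
      set m : ℕ := x.val / p ^ s with hmdef
      have hm : p ^ s * m = x.val := Nat.ordProj_mul_ordCompl_eq_self _ _
      have hpm : ¬ p ∣ m := Nat.not_dvd_ordCompl hp hvne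
      have hs2 : s < a := by
        have h1 : p ^ s ≤ x.val := Nat.le_of_dvd (Nat.pos_of_ne_zero hvne) hps
        have h2 : x.val < p ^ a := ZMod.val_lt x
        exact (Nat.pow_lt_pow_iff_right hp.one_lt).1 (lt_of_le_of_lt h1 h2)
      have hcop : Nat.Coprime m (p ^ a) :=
        (Nat.coprime_comm.1 ((hp.coprime_iff_not_dvd).2 hpm)).pow_right a
      obtain ⟨k, -, hk⟩ := Nat.exists_mul_mod_eq_one_of_coprime hcop
        (Nat.one_lt_pow ha.ne' hp.one_lt)
      have hpk : ¬ p ∣ k := by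
        intro hd
        have h1 : p ∣ m * k := Dvd.dvd.mul_left hd _
        have : p ∣ m * k % p ^ a := (Nat.dvd_mod_iff (dvd_pow_self p ha.ne')).2 h1
        rw [hk] at this
        exact absurd (Nat.le_of_dvd one_pos this) (by have := hp.two_le; omega)
      refine ⟨s, (k : ZMod p) * y0, hs2.le, fun h => absurd h hs2.ne, fun _ => ?_, ?_⟩
      · refine mul_ne_zero ?_ hy0ne
        rw [Ne, ZMod.natCast_eq_zero_iff]
        exact hpk
      · rw [aux_norm hp ha x y0 hpk]
        congr 2
        have hxcast : x = ((x.val : ℕ) : ZMod (p^a)) := by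
          rw [ZMod.natCast_val, ZMod.cast_id]
        rw [hxcast, ← Nat.cast_mul]
        have : k * x.val = p ^ s * (m * k) := by rw [← hm]; ring
        rw [this, Nat.cast_mul, ← ZMod.natCast_mod (m * k), hk, Nat.cast_one, mul_one]
  · -- s = 0 case
    have hcop : Nat.Coprime x.val (p ^ a) :=
      (Nat.coprime_comm.1 ((hp.coprime_iff_not_dvd).2 hdx)).pow_right a
    obtain ⟨k, -, hk⟩ := Nat.exists_mul_mod_eq_one_of_coprime hcop
      (Nat.one_lt_pow ha.ne' hp.one_lt)
    have hpk : ¬ p ∣ k := by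
      intro hd
      have h1 : p ∣ x.val * k := Dvd.dvd.mul_left hd _
      have : p ∣ x.val * k % p ^ a := (Nat.dvd_mod_iff (dvd_pow_self p ha.ne')).2 h1
      rw [hk] at this
      exact absurd (Nat.le_of_dvd one_pos this) (by have := hp.two_le; omega)
    refine ⟨0, (k : ZMod p) * y0, Nat.zero_le _, fun h => absurd h.symm ha.ne', by omega, ?_⟩
    rw [aux_norm hp ha x y0 hpk]
    congr 2
    have hxcast : x = ((x.val : ℕ) : ZMod (p^a)) := by
      rw [ZMod.natCast_val, ZMod.cast_id]
    rw [hxcast, ← Nat.cast_mul, mul_comm k x.val, ← ZMod.natCast_mod (x.val * k), hk, pow_zero, Nat.cast_one]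

theorem aux_canon_max (hp : p.Prime) (ha : 0 < a) {s : ℕ} {y : ZMod p} (hs : s ≤ a)
    (hy : 1 ≤ s → y ≠ 0) :
    IsMaximalCyclic (Subgroup.zpowers
      ((Multiplicative.ofAdd ((p^s : ℕ) : ZMod (p^a)), Multiplicative.ofAdd y) :
        Multiplicative (ZMod (p^a)) × Multiplicative (ZMod p))) := by
  haveI : NeZero (p ^ a) := ⟨pow_ne_zero a hp.ne_zero⟩
  haveI : NeZero p := ⟨hp.ne_zero⟩
  haveI : Fintype (ZMod (p^a)) := ZMod.fintype _
  haveI : Fintype (ZMod p) := ZMod.fintype _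
  haveI : Finite (Multiplicative (ZMod (p^a)) × Multiplicative (ZMod p)) :=
    Finite.of_equiv (ZMod (p^a) × ZMod p)
      (Equiv.prodCongr Multiplicative.ofAdd Multiplicative.ofAdd)
  refine aux_maximal_of_not_pow hp (aux_pgroup hp) _ ?_
  rw [aux_ppow_iff hp ha]
  rintro ⟨h1, h2⟩
  rcases Nat.eq_zero_or_pos s with rfl | hs1
  · rw [pow_zero, Nat.cast_one] at h1
    have hone : (1 : ZMod (p^a)).val = 1 := by
      refine ZMod.val_one_eq_one_mod _ ▸ ?_
      exact Nat.mod_eq_of_lt (Nat.one_lt_pow ha.ne' hp.one_lt)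
    rw [hone] at h1
    exact absurd (Nat.le_of_dvd one_pos h1) (by have := hp.two_le; omega)
  · exact hy hs1 h2

theorem stmt8 (p a : ℕ) (hp : p.Prime) (ha : 0 < a) :
    Nat.card {H : Subgroup (Multiplicative (ZMod (p ^ a)) × Multiplicative (ZMod p)) //
      IsMaximalCyclic H} = a * p - a + 2 := by
  haveI : NeZero (p ^ a) := ⟨pow_ne_zero a hp.ne_zero⟩
  haveI : NeZero p := ⟨hp.ne_zero⟩
  haveI : Fintype (ZMod p) := ZMod.fintype _
  haveI : Fact (1 < p) := ⟨hp.one_lt⟩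
  classical
  let I : Type := ZMod p ⊕ (Fin (a-1) × {y : ZMod p // y ≠ 0}) ⊕ PUnit
  let enc : I → ℕ × ZMod p := fun i => match i with
    | Sum.inl y => (0, y)
    | Sum.inr (Sum.inl (t, y)) => (t.val + 1, y.1)
    | Sum.inr (Sum.inr _) => (a, (1 : ZMod p))
  have henc : ∀ i : I, (enc i).1 ≤ a ∧ ((enc i).1 = a → (enc i).2 = 1) ∧
      (1 ≤ (enc i).1 → (enc i).2 ≠ 0) := by
    rintro (y | ⟨t, y⟩ | _)
    · exact ⟨Nat.zero_le _, fun h => absurd h.symm ha.ne', by intro h; simp [enc] at h⟩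
    · have := t.isLt
      exact ⟨by simp [enc]; omega, fun h => absurd h (by simp [enc]; omega), fun _ => y.2⟩
    · exact ⟨le_rfl, fun _ => rfl, fun _ => one_ne_zero⟩
  let f : I → {H : Subgroup (Multiplicative (ZMod (p ^ a)) × Multiplicative (ZMod p)) //
      IsMaximalCyclic H} := fun i =>
    ⟨Subgroup.zpowers (Multiplicative.ofAdd ((p^(enc i).1 : ℕ) : ZMod (p^a)),
        Multiplicative.ofAdd (enc i).2),
      aux_canon_max hp ha (henc i).1 (henc i).2.2⟩
  have hbij : Function.Bijective f := by
    constructor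
    · intro i j hij
      have h := Subtype.ext_iff.1 hij
      obtain ⟨h1, h2⟩ := aux_inj hp ha (henc i).1 (henc j).1 (henc i).2.1 (henc j).2.1 h
      revert h1 h2
      rcases i with (y | ⟨t, y⟩ | u) <;> rcases j with (z | ⟨r, z⟩ | v) <;>
        intro h1 h2 <;> simp only [enc] at h1 h2
      · rw [h2]
      · exact absurd h1 (by omega)
      · exact absurd h1 (by have := ha; omega)
      · exact absurd h1 (by omega)
      · have ht : t = r := Fin.ext (by omega)
        have hy : y = z := Subtype.ext h2
        rw [ht, hy]
      · have := t.isLt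
        exact absurd h1 (by omega)
      · exact absurd h1 (by have := ha; omega)
      · have := r.isLt
        exact absurd h1 (by omega)
      · rfl
    · rintro ⟨H, hH⟩
      obtain ⟨s, y, hs, hys, hy, hHe⟩ := aux_classify hp ha H hH
      by_cases hs0 : s = 0
      · refine ⟨Sum.inl y, ?_⟩
        apply Subtype.ext
        show _ = H
        rw [hHe]
        subst hs0
        rfl
      · by_cases hsa : s = a
        · refine ⟨Sum.inr (Sum.inr PUnit.unit), ?_⟩
          apply Subtype.ext
          show _ = H
          rw [hHe, hys hsa]
          subst hsa
          rfl
        · refine ⟨Sum.inr (Sum.inl (⟨s - 1, by omega⟩, ⟨y, hy (by omega)⟩)), ?_⟩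
          apply Subtype.ext
          have hss : s - 1 + 1 = s := by omega
          show Subgroup.zpowers (Multiplicative.ofAdd ((p^(s - 1 + 1) : ℕ) : ZMod (p^a)),
            Multiplicative.ofAdd y) = H
          rw [hss, hHe]
  rw [← Nat.card_congr (Equiv.ofBijective f hbij)]
  have hcI : Nat.card I = p + (a-1) * (p-1) + 1 := by
    have hsub : Nat.card {y : ZMod p // y ≠ 0} = p - 1 := by
      rw [Nat.card_eq_fintype_card]
      have := Fintype.card_subtype_compl (fun y : ZMod p => y = 0)
      simp only [Fintype.card_subtype_eq, ZMod.card] at this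
      exact this
    rw [Nat.card_sum, Nat.card_sum, Nat.card_prod, hsub, Nat.card_eq_fintype_card,
      Nat.card_eq_fintype_card, Fintype.card_fin, ZMod.card]
    simp
    ring
  rw [hcI]
  obtain ⟨a', rfl⟩ : ∃ a', a = a' + 1 := ⟨a - 1, by omega⟩
  obtain ⟨p', rfl⟩ : ∃ p', p = p' + 2 := ⟨p - 2, by have := hp.two_le; omega⟩
  have h2 : (a' + 1) * (p' + 2) = a' * p' + 2 * a' + p' + 2 := by ring
  have h3 : (a' + 1 - 1) * (p' + 2 - 1) = a' * p' + a' := by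
    have e1 : a' + 1 - 1 = a' := by omega
    have e2 : p' + 2 - 1 = p' + 1 := by omega
    rw [e1, e2]
    ring
  rw [h2, h3]
  generalize a' * p' = t
  omega
end

section
/- If A and B are finite groups of coprime orders, then the number of maximal cyclic subgroups of A × B equals the product of the numbers of maximal cyclic subgroups of A and of B. -/
section Aux

open Subgroup

variable {A B : Type*} [Group A] [Group B] [Finite A] [Finite B]

lemma aux_map_fst_prod (K : Subgroup A) (L : Subgroup B) :
    (K.prod L).map (MonoidHom.fst A B) = K := by
  ext a
  constructor
  · rintro ⟨⟨a', b⟩, ⟨ha, hb⟩, rfl⟩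
    exact ha
  · intro ha
    exact ⟨(a, 1), ⟨ha, one_mem L⟩, rfl⟩

lemma aux_map_snd_prod (K : Subgroup A) (L : Subgroup B) :
    (K.prod L).map (MonoidHom.snd A B) = L := by
  ext b
  constructor
  · rintro ⟨⟨a, b'⟩, ⟨ha, hb⟩, rfl⟩
    exact hb
  · intro hb
    exact ⟨(1, b), ⟨one_mem K, hb⟩, rfl⟩

lemma aux_mem_of_mem (hcop : Nat.Coprime (Nat.card A) (Nat.card B))
    {H : Subgroup (A × B)} {a : A} {b : B} (h : (a, b) ∈ H) :
    (a, 1) ∈ H := by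
  have hco : (orderOf a).Coprime (orderOf b) :=
    Nat.Coprime.coprime_dvd_right (orderOf_dvd_natCard b)
      (Nat.Coprime.coprime_dvd_left (orderOf_dvd_natCard a) hcop)
  obtain ⟨k, hk1, hk2⟩ := Nat.chineseRemainder hco 1 0
  have : (a, b) ^ k = (a, 1) := by
    have ha : a ^ k = a := by
      conv_rhs => rw [← pow_one a]
      rw [pow_eq_pow_iff_modEq]
      exact hk1
    have hb : b ^ k = 1 := by
      rw [← orderOf_dvd_iff_pow_eq_one]
      exact (Nat.modEq_zero_iff_dvd).mp hk2
    simp [Prod.pow_mk, ha, hb]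
  rw [← this]
  exact pow_mem h k

lemma aux_eq_prod (hcop : Nat.Coprime (Nat.card A) (Nat.card B))
    (H : Subgroup (A × B)) :
    H = (H.map (MonoidHom.fst A B)).prod (H.map (MonoidHom.snd A B)) := by
  apply le_antisymm
  · intro x hx
    exact ⟨⟨x, hx, rfl⟩, ⟨x, hx, rfl⟩⟩
  · rintro ⟨a, b⟩ ⟨ha, hb⟩
    obtain ⟨⟨a1, b1⟩, h1, h1e⟩ := ha
    obtain ⟨⟨a2, b2⟩, h2, h2e⟩ := hb
    simp only [MonoidHom.coe_fst] at h1e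
    simp only [MonoidHom.coe_snd] at h2e
    have hA : ((a, 1) : A × B) ∈ H := by
      rw [← h1e]; exact aux_mem_of_mem hcop h1
    have hB : ((1, b) : A × B) ∈ H := by
      rw [← h2e]
      have h2' : ((b2, a2) : B × A) ∈ H.comap (MulEquiv.prodComm : B × A ≃* A × B).toMonoidHom := by
        simpa using h2
      have := aux_mem_of_mem hcop.symm h2'
      simpa using this

    have := mul_mem hA hB
    simpa using this

lemma aux_coprime_cards (hcop : Nat.Coprime (Nat.card A) (Nat.card B))
    (K : Subgroup A) (L : Subgroup B) :
    Nat.Coprime (Nat.card K) (Nat.card L) :=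
  Nat.Coprime.coprime_dvd_right (Subgroup.card_subgroup_dvd_card L)
    (Nat.Coprime.coprime_dvd_left (Subgroup.card_subgroup_dvd_card K) hcop)

lemma aux_isCyclic_prod (hcop : Nat.Coprime (Nat.card A) (Nat.card B))
    (K : Subgroup A) (L : Subgroup B) (hK : IsCyclic K) (hL : IsCyclic L) :
    IsCyclic (K.prod L) := by
  have hco := aux_coprime_cards hcop K L
  obtain ⟨g, hg⟩ := hK.exists_generator
  obtain ⟨h, hh⟩ := hL.exists_generator
  have hog : orderOf g = Nat.card K := orderOf_eq_card_of_forall_mem_zpowers hg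
  have hoh : orderOf h = Nat.card L := orderOf_eq_card_of_forall_mem_zpowers hh
  have : IsCyclic (K × L) := by
    apply isCyclic_of_orderOf_eq_card (g, h)
    rw [Prod.orderOf, hog, hoh, Nat.Coprime.lcm_eq_mul hco, Nat.card_prod]
  exact isCyclic_of_surjective (K.prodEquiv L).symm.toMonoidHom
    (K.prodEquiv L).symm.surjective

lemma aux_isCyclic_map {G G' : Type*} [Group G] [Group G'] (f : G →* G')
    (H : Subgroup G) (hH : IsCyclic H) : IsCyclic (H.map f) :=
  isCyclic_of_surjective (f.subgroupMap H) (f.subgroupMap_surjective H)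

lemma aux_max_prod (hcop : Nat.Coprime (Nat.card A) (Nat.card B))
    {K : Subgroup A} {L : Subgroup B} (hK : IsMaximalCyclic K)
    (hL : IsMaximalCyclic L) : IsMaximalCyclic (K.prod L) := by
  refine ⟨aux_isCyclic_prod hcop K L hK.1 hL.1, fun M hM hle => ?_⟩
  have hMeq := aux_eq_prod hcop M
  have hKle : K ≤ M.map (MonoidHom.fst A B) := by
    rw [← aux_map_fst_prod K L]
    exact Subgroup.map_mono hle
  have hLle : L ≤ M.map (MonoidHom.snd A B) := by
    rw [← aux_map_snd_prod K L]
    exact Subgroup.map_mono hle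
  have h1 : K = M.map (MonoidHom.fst A B) :=
    hK.2 _ (aux_isCyclic_map _ _ hM) hKle
  have h2 : L = M.map (MonoidHom.snd A B) :=
    hL.2 _ (aux_isCyclic_map _ _ hM) hLle
  rw [← h1, ← h2] at hMeq
  exact hMeq.symm

lemma aux_max_fst (hcop : Nat.Coprime (Nat.card A) (Nat.card B))
    {H : Subgroup (A × B)} (hH : IsMaximalCyclic H) :
    IsMaximalCyclic (H.map (MonoidHom.fst A B)) := by
  refine ⟨aux_isCyclic_map _ _ hH.1, fun K hK hle => ?_⟩
  have hsnd : IsCyclic (H.map (MonoidHom.snd A B)) := aux_isCyclic_map _ _ hH.1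
  have hcy : IsCyclic (K.prod (H.map (MonoidHom.snd A B))) :=
    aux_isCyclic_prod hcop _ _ hK hsnd
  have hle2 : H ≤ K.prod (H.map (MonoidHom.snd A B)) :=
    (aux_eq_prod hcop H).le.trans (Subgroup.prod_mono hle le_rfl)
  have := hH.2 _ hcy hle2
  calc H.map (MonoidHom.fst A B)
      = (K.prod (H.map (MonoidHom.snd A B))).map (MonoidHom.fst A B) := by rw [← this]
    _ = K := aux_map_fst_prod _ _

lemma aux_max_snd (hcop : Nat.Coprime (Nat.card A) (Nat.card B))
    {H : Subgroup (A × B)} (hH : IsMaximalCyclic H) :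
    IsMaximalCyclic (H.map (MonoidHom.snd A B)) := by
  refine ⟨aux_isCyclic_map _ _ hH.1, fun L hL hle => ?_⟩
  have hfst : IsCyclic (H.map (MonoidHom.fst A B)) := aux_isCyclic_map _ _ hH.1
  have hcy : IsCyclic ((H.map (MonoidHom.fst A B)).prod L) :=
    aux_isCyclic_prod hcop _ _ hfst hL
  have hle2 : H ≤ (H.map (MonoidHom.fst A B)).prod L :=
    (aux_eq_prod hcop H).le.trans (Subgroup.prod_mono le_rfl hle)
  have := hH.2 _ hcy hle2
  calc H.map (MonoidHom.snd A B)
      = ((H.map (MonoidHom.fst A B)).prod L).map (MonoidHom.snd A B) := by rw [← this]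
    _ = L := aux_map_snd_prod _ _

end Aux

theorem stmt11 (A B : Type*) [Group A] [Group B] [Finite A] [Finite B]
    (hcop : Nat.Coprime (Nat.card A) (Nat.card B)) :
    Nat.card {H : Subgroup (A × B) // IsMaximalCyclic H}
      = Nat.card {H : Subgroup A // IsMaximalCyclic H}
        * Nat.card {H : Subgroup B // IsMaximalCyclic H} := by
  rw [← Nat.card_prod]
  apply Nat.card_congr
  exact {
    toFun := fun H => (⟨H.1.map (MonoidHom.fst A B), aux_max_fst hcop H.2⟩,
      ⟨H.1.map (MonoidHom.snd A B), aux_max_snd hcop H.2⟩)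
    invFun := fun p => ⟨p.1.1.prod p.2.1, aux_max_prod hcop p.1.2 p.2.2⟩
    left_inv := fun H => Subtype.ext (aux_eq_prod hcop H.1).symm
    right_inv := fun p => by
      ext1
      · exact Subtype.ext (aux_map_fst_prod p.1.1 p.2.1)
      · exact Subtype.ext (aux_map_snd_prod p.1.1 p.2.1) }
end

section
/- Let G be a finite group and suppose g ∈ G normalizes every maximal cyclic subgroup of G. Then g normalizes every subgroup of G. -/
lemma aux14 {G : Type*} [Group G] [Finite G] (g : G)
    (hg : ∀ H : Subgroup G, IsMaximalCyclic H → g ∈ Subgroup.normalizer (H : Set G)) (x : G) :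
    g * x * g⁻¹ ∈ Subgroup.zpowers x := by
  -- find a maximal cyclic subgroup containing zpowers x
  have hfin : (Set.univ : Set (Subgroup G)).Finite := Set.finite_univ
  obtain ⟨M, hM, hxM, hmax⟩ :
      ∃ M : Subgroup G, IsCyclic M ∧ Subgroup.zpowers x ≤ M ∧
        ∀ K : Subgroup G, IsCyclic K → M ≤ K → M = K := by
    obtain ⟨M, hMs, hmax⟩ := Set.Finite.exists_maximalFor id
      {K : Subgroup G | IsCyclic K ∧ Subgroup.zpowers x ≤ K}
      (Set.toFinite _) ⟨Subgroup.zpowers x, ⟨⟨⟨x, Subgroup.mem_zpowers x⟩, by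
        rintro ⟨y, k, rfl⟩
        exact ⟨k, Subtype.ext (by simp)⟩⟩⟩, le_refl _⟩
    exact ⟨M, hMs.1, hMs.2, fun K hK hMK =>
      le_antisymm hMK (hmax ⟨hK, le_trans hMs.2 hMK⟩ hMK)⟩
  have hMmax : IsMaximalCyclic M := ⟨hM, hmax⟩
  obtain ⟨⟨m, hm⟩⟩ := hM
  -- M = zpowers (m : G)
  have hMeq : M = Subgroup.zpowers (m : G) := by
    apply le_antisymm
    · intro y hy
      obtain ⟨k, hk⟩ := hm ⟨y, hy⟩
      exact ⟨k, congrArg Subtype.val hk⟩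
    · exact (Subgroup.zpowers_le).2 m.2
  have hgM := hg M hMmax
  have hconj : g * (m : G) * g⁻¹ ∈ M :=
    (Subgroup.mem_normalizer_iff.1 hgM (m : G)).1 m.2
  obtain ⟨t, ht⟩ := hMeq.le hconj
  have hxm := hMeq.le (hxM (Subgroup.mem_zpowers x))
  obtain ⟨k, hk⟩ := hxm
  simp only at ht hk
  refine ⟨t, ?_⟩
  show x ^ t = g * x * g⁻¹
  have h1 : g * x * g⁻¹ = (g * (m : G) * g⁻¹) ^ k := by
    rw [← hk, conj_zpow]
  rw [h1, ← ht, ← zpow_mul, mul_comm t k, zpow_mul, hk]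

theorem stmt14 (G : Type*) [Group G] [Finite G] (g : G)
    (hg : ∀ H : Subgroup G, IsMaximalCyclic H → g ∈ Subgroup.normalizer (H : Set G)) :
    ∀ H : Subgroup G, g ∈ Subgroup.normalizer (H : Set G) := by
  intro H
  have hg' : ∀ K : Subgroup G, IsMaximalCyclic K → g⁻¹ ∈ Subgroup.normalizer (K : Set G) :=
    fun K hK => (Subgroup.normalizer (K : Set G)).inv_mem (hg K hK)
  rw [Subgroup.mem_normalizer_iff]
  intro x
  constructor
  · intro hx
    exact Subgroup.zpowers_le.2 hx (aux14 g hg x)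
  · intro hx
    have := Subgroup.zpowers_le.2 hx (aux14 g⁻¹ hg' (g * x * g⁻¹))
    simpa [mul_assoc] using this
end

section
/- Let G be a noncyclic finite p-group of exponent p^m and order p^n, with t cyclic subgroups. Then p^{n−m} ≤ t. -/
theorem stmt15 (p m n : ℕ) (hp : p.Prime) (G : Type*) [Group G] [Finite G]
    (hG : IsPGroup p G) (hnc : ¬ IsCyclic G)
    (hexp : Monoid.exponent G = p ^ m) (hord : Nat.card G = p ^ n) (t : ℕ)
    (ht : t = Nat.card {H : Subgroup G // IsCyclic H}) :
    p ^ (n - m) ≤ t := by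
  classical
  haveI := Fintype.ofFinite G
  haveI : Fintype {H : Subgroup G // IsCyclic H} := Fintype.ofFinite _
  have hcyc : ∀ g : G, IsCyclic (Subgroup.zpowers g) := fun g => by
    exact ⟨⟨⟨g, Subgroup.mem_zpowers g⟩, fun x => by
      obtain ⟨k, hk⟩ := x.2
      exact ⟨k, Subtype.ext (by simpa using hk)⟩⟩⟩
  set f : G → {H : Subgroup G // IsCyclic H} := fun g =>
    ⟨Subgroup.zpowers g, hcyc g⟩ with hf
  have htpos : 0 < t := by
    rw [ht]
    have : Nonempty {H : Subgroup G // IsCyclic H} := ⟨⊥, Bot.isCyclic⟩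
    exact Nat.card_pos
  have key : Fintype.card G ≤ p ^ m * (Finset.univ.image f).card := by
    apply Finset.card_le_mul_card_image
    intro a ha
    obtain ⟨g, -, hg⟩ := Finset.mem_image.mp ha
    have hsub : (Finset.univ.filter fun x => f x = a) ⊆
        (Subgroup.zpowers g : Set G).toFinset := by
      intro x hx
      rw [Finset.mem_filter] at hx
      rw [Set.mem_toFinset]
      have : x ∈ Subgroup.zpowers x := Subgroup.mem_zpowers x
      have hxa : Subgroup.zpowers x = Subgroup.zpowers g := by
        have := hx.2.trans hg.symm
        exact congrArg Subtype.val this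
      rwa [hxa] at this
    calc (Finset.univ.filter fun x => f x = a).card
        ≤ (Subgroup.zpowers g : Set G).toFinset.card := Finset.card_le_card hsub
      _ = Nat.card (Subgroup.zpowers g) := by
          rw [Set.toFinset_card, Nat.card_eq_fintype_card]
          rfl
      _ = orderOf g := Nat.card_zpowers g
      _ ≤ p ^ m := by
          rw [← hexp]
          exact Nat.le_of_dvd (hexp ▸ pow_pos hp.pos m) (Monoid.order_dvd_exponent g)
  have himg : (Finset.univ.image f).card ≤ t := by
    rw [ht, Nat.card_eq_fintype_card]
    exact (Finset.card_le_card (Finset.subset_univ _)).trans (by simp)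
  have hmain : p ^ n ≤ p ^ m * t := by
    calc p ^ n = Fintype.card G := by rw [← Nat.card_eq_fintype_card, hord]
      _ ≤ p ^ m * (Finset.univ.image f).card := key
      _ ≤ p ^ m * t := Nat.mul_le_mul_left _ himg
  rcases le_or_gt m n with h | h
  · have : p ^ (n - m) * p ^ m ≤ t * p ^ m := by
      rw [← pow_add, Nat.sub_add_cancel h, mul_comm t]
      exact hmain
    exact Nat.le_of_mul_le_mul_right this (pow_pos hp.pos m)
  · rw [Nat.sub_eq_zero_of_le h.le, pow_zero]
    exact htpos
end
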